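/- arXiv:2601.02547 — 6 statements merged into one kernel-verified Lean document; each statement's English description precedes it below -/
import Mathlib

section
/- Let n ≥ 1 and let d : Fin n → Fin n → ℝ be an ultrametric with d i j ≤ 2 for all i, j. Then the n × n real symmetric matrix A with entries A i j = (1 - 1/n) - d i j / 2 is positive semidefinite. (Equivalently, for any ultrametric tree with n leaves whose common distance from the root is 1, (1 - 1/n)·J ≥ D/2 in the positive-semidefinite order, where J is the all-ones matrix and D the leaf distance matrix.) -/
open Finset

/-- Key lemma: quadratic form lower bound for ultrametric matrices, by strong induction. -/
theorem ultrametric_key {ι : Type*} [DecidableEq ι] (s : Finset ι) :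
    ∀ (d : ι → ι → ℝ) (x : ι → ℝ),
      (∀ i ∈ s, d i i = 0) →
      (∀ i ∈ s, ∀ j ∈ s, d i j = d j i) →
      (∀ i ∈ s, ∀ j ∈ s, 0 ≤ d i j) →
      (∀ i ∈ s, ∀ j ∈ s, ∀ k ∈ s, d i j ≤ max (d i k) (d k j)) →
      (∀ i ∈ s, ∀ j ∈ s, d i j ≤ 2) →
      (∑ i ∈ s, x i) ^ 2 / (s.card : ℝ) ≤
        ∑ i ∈ s, ∑ j ∈ s, x i * x j * (1 - d i j / 2) := by
  induction s using Finset.strongInduction with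
  | _ s ih =>
    intro d x hdiag hsymm hnn hultra hbd
    rcases s.eq_empty_or_nonempty with rfl | ⟨i0, hi0⟩
    · simp
    have hprod : (s ×ˢ s).Nonempty := ⟨(i0, i0), by simp [hi0]⟩
    set m : ℝ := (s ×ˢ s).sup' hprod (fun p => d p.1 p.2) with hm
    have hle_m : ∀ i ∈ s, ∀ j ∈ s, d i j ≤ m := fun i hi j hj =>
      Finset.le_sup' (f := fun p : ι × ι => d p.1 p.2) (by simp [hi, hj] : (i, j) ∈ s ×ˢ s)
    have hm2 : m ≤ 2 := Finset.sup'_le _ _ fun p hp => by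
      simp only [Finset.mem_product] at hp; exact hbd _ hp.1 _ hp.2
    have hcard : (1 : ℝ) ≤ s.card := by
      exact_mod_cast Finset.one_le_card.2 ⟨i0, hi0⟩
    rcases le_or_gt m 0 with hm0 | hm0
    · -- all distances are zero
      have hz : ∀ i ∈ s, ∀ j ∈ s, d i j = 0 := fun i hi j hj =>
        le_antisymm ((hle_m i hi j hj).trans hm0) (hnn i hi j hj)
      have : ∑ i ∈ s, ∑ j ∈ s, x i * x j * (1 - d i j / 2) = (∑ i ∈ s, x i) ^ 2 := by
        rw [sq, Finset.sum_mul_sum]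
        exact Finset.sum_congr rfl fun i hi => Finset.sum_congr rfl fun j hj => by
          rw [hz i hi j hj]; ring
      rw [this]
      exact div_le_self (sq_nonneg _) hcard
    -- m > 0
    set t := s.filter (fun j => d i0 j < m) with ht
    set u := s.filter (fun j => ¬ d i0 j < m) with hu
    have hts : t ⊆ s := Finset.filter_subset _ _
    have hus : u ⊆ s := Finset.filter_subset _ _
    have hi0t : i0 ∈ t := Finset.mem_filter.2 ⟨hi0, by rw [hdiag i0 hi0]; exact hm0⟩
    have hu_eq : ∀ j ∈ u, d i0 j = m := by
      intro j hj
      rcases Finset.mem_filter.1 hj with ⟨hjs, hjm⟩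
      exact le_antisymm (hle_m i0 hi0 j hjs) (not_lt.1 hjm)
    -- u is nonempty
    obtain ⟨p, hp, hpm⟩ := Finset.exists_mem_eq_sup' hprod (fun p : ι × ι => d p.1 p.2)
    rw [Finset.mem_product] at hp
    have hune : u.Nonempty := by
      by_contra hne
      rw [Finset.not_nonempty_iff_eq_empty] at hne
      have hp1 : p.1 ∈ t := by
        have : p.1 ∈ t ∪ u := by
          rw [ht, hu, Finset.filter_union_filter_not_eq]; exact hp.1
        simpa [hne] using this
      have hp2 : p.2 ∈ t := by
        have : p.2 ∈ t ∪ u := by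
          rw [ht, hu, Finset.filter_union_filter_not_eq]; exact hp.2
        simpa [hne] using this
      have h1 : d p.1 i0 < m := by
        rw [hsymm _ hp.1 _ hi0]; exact (Finset.mem_filter.1 hp1).2
      have h2 : d i0 p.2 < m := (Finset.mem_filter.1 hp2).2
      have h3 := hultra p.1 hp.1 p.2 hp.2 i0 hi0
      have h4 : d p.1 p.2 < m := lt_of_le_of_lt h3 (max_lt h1 h2)
      rw [← hpm] at h4; exact lt_irrefl _ h4
    have ht_lt : ∀ i ∈ t, ∀ j ∈ t, d i j < m := by
      intro i hi j hj
      have h1 : d i i0 < m := by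
        rw [hsymm _ (hts hi) _ hi0]; exact (Finset.mem_filter.1 hi).2
      have h2 : d i0 j < m := (Finset.mem_filter.1 hj).2
      exact lt_of_le_of_lt (hultra i (hts hi) j (hts hj) i0 hi0) (max_lt h1 h2)
    have hcross : ∀ i ∈ t, ∀ j ∈ u, d i j = m := by
      intro i hi j hj
      have h1 : d i i0 < m := by
        rw [hsymm _ (hts hi) _ hi0]; exact (Finset.mem_filter.1 hi).2
      have h2 : d i0 j = m := hu_eq j hj
      have hle : d i j ≤ m := by
        have := hultra i (hts hi) j (hus hj) i0 hi0
        exact this.trans (max_le h1.le h2.le)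
      have hge : m ≤ d i j := by
        have h5 := hultra i0 hi0 j (hus hj) i (hts hi)
        rw [h2] at h5
        rcases max_cases (d i0 i) (d i j) with ⟨he, _⟩ | ⟨he, _⟩
        · rw [he] at h5
          rw [hsymm _ hi0 _ (hts hi)] at h5
          exact absurd (lt_of_le_of_lt h5 h1) (lt_irrefl m)
        · rw [he] at h5; exact h5
      exact le_antisymm hle hge
    obtain ⟨j0, hj0⟩ := hune
    have hi0u : i0 ∉ u := fun h => (Finset.mem_filter.1 h).2 (by rw [hdiag i0 hi0]; exact hm0)
    have hj0t : j0 ∉ t := fun h => by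
      have h6 := hcross j0 h j0 hj0
      rw [hdiag j0 (hts h)] at h6
      exact absurd h6.symm (ne_of_gt hm0)
    have htss : t ⊂ s := ⟨hts, fun h => hj0t (h (hus hj0))⟩
    have huss : u ⊂ s := ⟨hus, fun h => hi0u (h hi0)⟩
    -- scaled metric
    set d' : ι → ι → ℝ := fun i j => 2 / m * d i j with hd'
    have hscale : (0:ℝ) < 2 / m := by positivity
    have hd'ultra : ∀ v : Finset ι, v ⊆ s →
        (∀ i ∈ v, d' i i = 0) ∧ (∀ i ∈ v, ∀ j ∈ v, d' i j = d' j i) ∧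
        (∀ i ∈ v, ∀ j ∈ v, 0 ≤ d' i j) ∧
        (∀ i ∈ v, ∀ j ∈ v, ∀ k ∈ v, d' i j ≤ max (d' i k) (d' k j)) ∧
        (∀ i ∈ v, ∀ j ∈ v, d' i j ≤ 2) := by
      intro v hv
      refine ⟨fun i hi => by rw [hd'] ; simp [hdiag i (hv hi)],
        fun i hi j hj => by rw [hd']; simp [hsymm i (hv hi) j (hv hj)],
        fun i hi j hj => mul_nonneg hscale.le (hnn i (hv hi) j (hv hj)),
        fun i hi j hj k hk => ?_, fun i hi j hj => ?_⟩
      · have h7 := hultra i (hv hi) j (hv hj) k (hv hk)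
        calc d' i j ≤ 2 / m * max (d i k) (d k j) :=
              mul_le_mul_of_nonneg_left h7 hscale.le
          _ = max (d' i k) (d' k j) := by
              rcases le_total (d i k) (d k j) with h | h
              · rw [max_eq_right h, max_eq_right (mul_le_mul_of_nonneg_left h hscale.le)]
              · rw [max_eq_left h, max_eq_left (mul_le_mul_of_nonneg_left h hscale.le)]
      · have h7 := hle_m i (hv hi) j (hv hj)
        calc d' i j ≤ 2 / m * m := mul_le_mul_of_nonneg_left h7 hscale.le
          _ = 2 := by field_simp
    obtain ⟨ha1, ha2, ha3, ha4, ha5⟩ := hd'ultra t hts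
    obtain ⟨hb1, hb2, hb3, hb4, hb5⟩ := hd'ultra u hus
    have iht := ih t htss d' x ha1 ha2 ha3 ha4 ha5
    have ihu := ih u huss d' x hb1 hb2 hb3 hb4 hb5
    -- splitting sums over s into t and u
    have hsplit : ∀ f : ι → ℝ, ∑ i ∈ s, f i = ∑ i ∈ t, f i + ∑ i ∈ u, f i := by
      intro f
      rw [ht, hu, Finset.sum_filter_add_sum_filter_not]
    -- pointwise decomposition
    have hterm : ∀ i ∈ s, ∀ j ∈ s, x i * x j * (1 - d i j / 2)
        = (1 - m / 2) * (x i * x j) + m / 2 * (x i * x j * (1 - d' i j / 2)) := by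
      intro i hi j hj
      rw [hd']
      field_simp
      ring
    have hQ : ∑ i ∈ s, ∑ j ∈ s, x i * x j * (1 - d i j / 2)
        = (1 - m / 2) * (∑ i ∈ s, x i) ^ 2
          + m / 2 * (∑ i ∈ s, ∑ j ∈ s, x i * x j * (1 - d' i j / 2)) := by
      have e1 : ∑ i ∈ s, ∑ j ∈ s, x i * x j * (1 - d i j / 2)
          = ∑ i ∈ s, ∑ j ∈ s, ((1 - m / 2) * (x i * x j)
              + m / 2 * (x i * x j * (1 - d' i j / 2))) :=
        Finset.sum_congr rfl fun i hi => Finset.sum_congr rfl fun j hj => hterm i hi j hj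
      rw [e1, sq, Finset.sum_mul_sum, Finset.mul_sum, Finset.mul_sum,
        ← Finset.sum_add_distrib]
      refine Finset.sum_congr rfl fun i _ => ?_
      rw [Finset.mul_sum, Finset.mul_sum, ← Finset.sum_add_distrib]
    -- cross terms vanish for d'
    have hc1 : ∀ i ∈ t, ∑ j ∈ u, x i * x j * (1 - d' i j / 2) = 0 := by
      intro i hi
      refine Finset.sum_eq_zero fun j hj => ?_
      have : d' i j = 2 := by
        rw [hd']; simp only; rw [hcross i hi j hj, div_mul_cancel₀ _ hm0.ne']
      rw [this]; ring
    have hc2 : ∀ i ∈ u, ∑ j ∈ t, x i * x j * (1 - d' i j / 2) = 0 := by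
      intro i hi
      refine Finset.sum_eq_zero fun j hj => ?_
      have : d' i j = 2 := by
        rw [hd']; simp only
        rw [hsymm i (hus hi) j (hts hj), hcross j hj i hi, div_mul_cancel₀ _ hm0.ne']
      rw [this]; ring
    have hsplit2 : ∑ i ∈ s, ∑ j ∈ s, x i * x j * (1 - d' i j / 2)
        = (∑ i ∈ t, ∑ j ∈ t, x i * x j * (1 - d' i j / 2))
          + (∑ i ∈ u, ∑ j ∈ u, x i * x j * (1 - d' i j / 2)) := by
      rw [hsplit (fun i => ∑ j ∈ s, x i * x j * (1 - d' i j / 2))]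
      have inner : ∀ i, ∑ j ∈ s, x i * x j * (1 - d' i j / 2)
          = ∑ j ∈ t, x i * x j * (1 - d' i j / 2)
            + ∑ j ∈ u, x i * x j * (1 - d' i j / 2) := fun i => hsplit _
      simp only [inner]
      rw [Finset.sum_add_distrib, Finset.sum_add_distrib,
        Finset.sum_eq_zero hc1, Finset.sum_eq_zero hc2]
      ring
    -- final estimates
    set St := ∑ i ∈ t, x i with hSt
    set Su := ∑ i ∈ u, x i with hSu
    set a := (t.card : ℝ) with hacard
    set b := (u.card : ℝ) with hbcard
    have ha1' : (1:ℝ) ≤ a := by rw [hacard]; exact_mod_cast Finset.one_le_card.2 ⟨i0, hi0t⟩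
    have hb1' : (1:ℝ) ≤ b := by rw [hbcard]; exact_mod_cast Finset.one_le_card.2 ⟨j0, hj0⟩
    have ha0 : (0:ℝ) < a := lt_of_lt_of_le one_pos ha1'
    have hb0 : (0:ℝ) < b := lt_of_lt_of_le one_pos hb1'
    have hScard : (s.card : ℝ) = a + b := by
      rw [hacard, hbcard, ← Nat.cast_add]
      norm_cast
      rw [ht, hu]
      exact (Finset.card_filter_add_card_filter_not _).symm
    have hSx : ∑ i ∈ s, x i = St + Su := hsplit x
    rw [hQ, hsplit2, hSx, hScard]
    have h4 : (St + Su) ^ 2 / (a + b) ≤ St ^ 2 / a + Su ^ 2 / b := by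
      rw [div_add_div _ _ ha0.ne' hb0.ne', div_le_div_iff₀ (by linarith : (0:ℝ) < a + b) (mul_pos ha0 hb0)]
      nlinarith [sq_nonneg (b * St - a * Su)]
    have h5 : (St + Su) ^ 2 / (a + b) ≤ (St + Su) ^ 2 :=
      div_le_self (sq_nonneg _) (by linarith)
    have h3 : St ^ 2 / a + Su ^ 2 / b
        ≤ (∑ i ∈ t, ∑ j ∈ t, x i * x j * (1 - d' i j / 2))
          + (∑ i ∈ u, ∑ j ∈ u, x i * x j * (1 - d' i j / 2)) := add_le_add iht ihu
    have e2 : m / 2 * ((St + Su) ^ 2 / (a + b))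
        ≤ m / 2 * ((∑ i ∈ t, ∑ j ∈ t, x i * x j * (1 - d' i j / 2))
          + (∑ i ∈ u, ∑ j ∈ u, x i * x j * (1 - d' i j / 2))) :=
      mul_le_mul_of_nonneg_left (h4.trans h3) (by linarith)
    have e3 : (1 - m / 2) * ((St + Su) ^ 2 / (a + b)) ≤ (1 - m / 2) * (St + Su) ^ 2 :=
      mul_le_mul_of_nonneg_left h5 (by linarith)
    have e4 : (1 - m / 2) * ((St + Su) ^ 2 / (a + b)) + m / 2 * ((St + Su) ^ 2 / (a + b))
        = (St + Su) ^ 2 / (a + b) := by ring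
    linarith

/-- **Theorem (ultrametric tree PSD bound).** For an ultrametric `d` on `n` points with
all distances at most `2` (equivalently, the leaf distance matrix of an ultrametric tree
of radius 1 with `n` leaves), the matrix `(1 - 1/n) • J - D/2` is positive semidefinite. -/
theorem ultrametric_psd (n : ℕ) (hn : 1 ≤ n) (d : Fin n → Fin n → ℝ)
    (h_diag : ∀ i, d i i = 0)
    (h_symm : ∀ i j, d i j = d j i)
    (h_nonneg : ∀ i j, 0 ≤ d i j)
    (h_ultra : ∀ i j k, d i j ≤ max (d i k) (d k j))
    (h_bound : ∀ i j, d i j ≤ 2) :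
    (Matrix.of fun i j : Fin n => (1 - 1 / (n : ℝ)) - d i j / 2).PosSemidef := by
  rw [Matrix.posSemidef_iff_dotProduct_mulVec]
  constructor
  · ext i j
    simp [Matrix.conjTranspose_apply, Matrix.IsHermitian, h_symm i j]
  · intro x
    have key := ultrametric_key (Finset.univ : Finset (Fin n)) d x
      (fun i _ => h_diag i) (fun i _ j _ => h_symm i j) (fun i _ j _ => h_nonneg i j)
      (fun i _ j _ k _ => h_ultra i j k) (fun i _ j _ => h_bound i j)
    rw [Finset.card_univ, Fintype.card_fin] at key
    have h0 : dotProduct (star x)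
        ((Matrix.of fun i j : Fin n => (1 - 1 / (n : ℝ)) - d i j / 2).mulVec x)
        = (∑ i, ∑ j, x i * x j * (1 - d i j / 2)) - (∑ i, x i) ^ 2 / n := by
      simp only [dotProduct, Matrix.mulVec, Pi.star_apply, star_trivial,
        Matrix.of_apply]
      have e1 : ∀ i : Fin n, x i * (∑ j, ((1 - 1 / (n : ℝ)) - d i j / 2) * x j)
          = ∑ j, (x i * x j * (1 - d i j / 2) - 1 / n * (x i * x j)) := by
        intro i
        rw [Finset.mul_sum]
        exact Finset.sum_congr rfl fun j _ => by ring
      calc ∑ i, x i * ∑ j, ((1 - 1 / (n : ℝ)) - d i j / 2) * x j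
          = ∑ i, ∑ j, (x i * x j * (1 - d i j / 2) - 1 / n * (x i * x j)) :=
            Finset.sum_congr rfl fun i _ => e1 i
        _ = (∑ i, ∑ j, x i * x j * (1 - d i j / 2))
              - 1 / n * ∑ i, ∑ j, x i * x j := by
            simp only [Finset.sum_sub_distrib, ← Finset.mul_sum]
        _ = (∑ i, ∑ j, x i * x j * (1 - d i j / 2)) - (∑ i, x i) ^ 2 / n := by
            rw [← Finset.sum_mul_sum, sq]
            ring
    rw [h0]
    linarith
end

section
/- Let n ≥ 1 and let d : Fin n → Fin n → ℝ be given by d i j = 2 for i ≠ j and d i i = 0 (the star ultrametric, which is the leaf distance function of the ultrametric tree of radius 1 in which the root is the parent of all n leaves). If c is a real number such that the n × n matrix with entries c - d i j / 2 is positive semidefinite, then c ≥ 1 - 1/n. Hence 1 - 1/n is the smallest constant c for which (c·J - D/2) is positive semidefinite for every ultrametric d on n points with d i j ≤ 2, where J is the all-ones matrix and D = (d i j). -/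
open Finset Matrix

lemma ultra_key {n : ℕ} (S : Finset (Fin n)) :
    ∀ (A : Fin n → Fin n → ℝ) (β : ℝ) (x : Fin n → ℝ),
    (∀ i ∈ S, ∀ j ∈ S, A i j = A j i) →
    (∀ i ∈ S, ∀ j ∈ S, ∀ k ∈ S, min (A i k) (A k j) ≤ A i j) →
    (∀ i ∈ S, A i i = β) →
    (∀ i ∈ S, ∀ j ∈ S, 0 ≤ A i j) →
    (∀ i ∈ S, ∀ j ∈ S, A i j ≤ β) →
    β * (∑ i ∈ S, x i)^2 ≤ (S.card : ℝ) * ∑ i ∈ S, ∑ j ∈ S, A i j * x i * x j := by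
  induction S using Finset.strongInduction with
  | _ S IH =>
    intro A β x hsym hmin hdiag h0 hβ
    rcases S.eq_empty_or_nonempty with rfl | hSne
    · simp
    by_cases hall : ∀ i ∈ S, ∀ j ∈ S, A i j = β
    · have hq : ∑ i ∈ S, ∑ j ∈ S, A i j * x i * x j = β * (∑ i ∈ S, x i)^2 := by
        calc ∑ i ∈ S, ∑ j ∈ S, A i j * x i * x j
            = ∑ i ∈ S, ∑ j ∈ S, β * x i * x j :=
              Finset.sum_congr rfl fun i hi => Finset.sum_congr rfl fun j hj => by
                rw [hall i hi j hj]
          _ = β * (∑ i ∈ S, x i)^2 := by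
              simp only [← Finset.mul_sum, ← Finset.sum_mul]; ring
      rw [hq]
      obtain ⟨i, hi⟩ := hSne
      have hβ0 : 0 ≤ β := by rw [← hdiag i hi]; exact h0 i hi i hi
      have hc : (1 : ℝ) ≤ S.card := by exact_mod_cast Finset.card_pos.mpr ⟨i, hi⟩
      nlinarith [mul_nonneg (mul_nonneg (by linarith : (0:ℝ) ≤ (S.card : ℝ) - 1) hβ0)
        (sq_nonneg (∑ i ∈ S, x i))]
    · push_neg at hall
      obtain ⟨i0, hi0, j0, hj0, hne0⟩ := hall
      have hP : (S ×ˢ S).Nonempty := hSne.product hSne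
      set μ := (S ×ˢ S).inf' hP (fun p => A p.1 p.2) with hμdef
      obtain ⟨p, hp, hpeq⟩ := Finset.exists_mem_eq_inf' hP (fun p => A p.1 p.2)
      rw [Finset.mem_product] at hp
      have hμle : ∀ i ∈ S, ∀ j ∈ S, μ ≤ A i j := fun i hi j hj => by
        have hmem : (i, j) ∈ S ×ˢ S := Finset.mem_product.mpr ⟨hi, hj⟩
        rw [hμdef]; exact Finset.inf'_le (fun p => A p.1 p.2) hmem
      have hμβ : μ < β := lt_of_le_of_ne (le_trans (hμle i0 hi0 j0 hj0) (hβ i0 hi0 j0 hj0))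
        (fun h => hne0 (le_antisymm (hβ i0 hi0 j0 hj0) (h ▸ hμle i0 hi0 j0 hj0)))
      have hμ0 : 0 ≤ μ := by rw [hμdef, hpeq]; exact h0 _ hp.1 _ hp.2
      set i1 := p.1 with hi1def
      set B := S.filter (fun i => μ < A i1 i) with hBdef
      set C := S.filter (fun i => ¬ μ < A i1 i) with hCdef
      have hBS : B ⊆ S := Finset.filter_subset _ _
      have hCS : C ⊆ S := Finset.filter_subset _ _
      have hi1B : i1 ∈ B := Finset.mem_filter.mpr ⟨hp.1, by rw [hdiag _ hp.1]; exact hμβ⟩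
      have hj1C : p.2 ∈ C := Finset.mem_filter.mpr ⟨hp.2, by rw [← hpeq]; exact lt_irrefl _⟩
      have hi1C : i1 ∉ C := fun h => (Finset.mem_filter.mp h).2 (Finset.mem_filter.mp hi1B).2
      have hj1B : p.2 ∉ B := fun h => (Finset.mem_filter.mp hj1C).2 (Finset.mem_filter.mp h).2
      have hBss : B ⊂ S := (Finset.ssubset_iff_of_subset hBS).mpr ⟨p.2, hp.2, hj1B⟩
      have hCss : C ⊂ S := (Finset.ssubset_iff_of_subset hCS).mpr ⟨i1, hp.1, hi1C⟩
      have hcross : ∀ i ∈ B, ∀ j ∈ C, A i j = μ := by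
        intro i hi j hj
        obtain ⟨hiS, hiB⟩ := Finset.mem_filter.mp hi
        obtain ⟨hjS, hjC⟩ := Finset.mem_filter.mp hj
        by_contra hne
        have hlt : μ < A i j := lt_of_le_of_ne (hμle i hiS j hjS) (Ne.symm hne)
        exact hjC (lt_of_lt_of_le (lt_min hiB hlt) (hmin i1 hp.1 j hjS i hiS))
      -- apply IH to B and C with matrix A - μ
      have hIH : ∀ T : Finset (Fin n), T ⊂ S →
          (β - μ) * (∑ i ∈ T, x i)^2 ≤
            (T.card : ℝ) * ∑ i ∈ T, ∑ j ∈ T, (A i j - μ) * x i * x j := by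
        intro T hT
        have hTS := hT.subset
        refine IH T hT (fun i j => A i j - μ) (β - μ) x ?_ ?_ ?_ ?_ ?_
        · intro i hi j hj; show A i j - μ = A j i - μ; rw [hsym i (hTS hi) j (hTS hj)]
        · intro i hi j hj k hk
          show min (A i k - μ) (A k j - μ) ≤ A i j - μ
          rw [min_sub_sub_right]
          exact sub_le_sub_right (hmin i (hTS hi) j (hTS hj) k (hTS hk)) μ
        · intro i hi; show A i i - μ = β - μ; rw [hdiag i (hTS hi)]
        · intro i hi j hj; show (0:ℝ) ≤ A i j - μ
          exact sub_nonneg.mpr (hμle i (hTS hi) j (hTS hj))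
        · intro i hi j hj; show A i j - μ ≤ β - μ
          exact sub_le_sub_right (hβ i (hTS hi) j (hTS hj)) μ
      have IHB := hIH B hBss
      have IHC := hIH C hCss
      -- sum splitting
      set f : Fin n → Fin n → ℝ := fun i j => (A i j - μ) * x i * x j with hfdef
      have hsplit1 : ∀ g : Fin n → ℝ, ∑ i ∈ S, g i = ∑ i ∈ B, g i + ∑ i ∈ C, g i :=
        fun g => (Finset.sum_filter_add_sum_filter_not S _ g).symm
      have hcrossB : ∀ i ∈ B, ∑ j ∈ C, f i j = 0 := by
        intro i hi
        refine Finset.sum_eq_zero fun j hj => ?_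
        simp [hfdef, hcross i hi j hj]
      have hcrossC : ∀ i ∈ C, ∑ j ∈ B, f i j = 0 := by
        intro i hi
        refine Finset.sum_eq_zero fun j hj => ?_
        have : A i j = μ := by
          rw [hsym i (hCS hi) j (hBS hj)]; exact hcross j hj i hi
        simp [hfdef, this]
      have hQsplit : ∑ i ∈ S, ∑ j ∈ S, f i j =
          (∑ i ∈ B, ∑ j ∈ B, f i j) + (∑ i ∈ C, ∑ j ∈ C, f i j) := by
        rw [hsplit1 (fun i => ∑ j ∈ S, f i j)]
        have h1 : ∑ i ∈ B, ∑ j ∈ S, f i j = ∑ i ∈ B, ∑ j ∈ B, f i j :=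
          Finset.sum_congr rfl fun i hi => by
            rw [hsplit1 (f i), hcrossB i hi, add_zero]
        have h2 : ∑ i ∈ C, ∑ j ∈ S, f i j = ∑ i ∈ C, ∑ j ∈ C, f i j :=
          Finset.sum_congr rfl fun i hi => by
            rw [hsplit1 (f i), hcrossC i hi, zero_add]
        rw [h1, h2]
      have hexpand : ∑ i ∈ S, ∑ j ∈ S, f i j =
          (∑ i ∈ S, ∑ j ∈ S, A i j * x i * x j) - μ * (∑ i ∈ S, x i)^2 := by
        have : ∀ i ∈ S, ∑ j ∈ S, f i j =
            (∑ j ∈ S, A i j * x i * x j) - (μ * x i) * ∑ j ∈ S, x j := by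
          intro i _
          rw [Finset.mul_sum, ← Finset.sum_sub_distrib]
          exact Finset.sum_congr rfl fun j _ => by simp [hfdef]; ring
        rw [Finset.sum_congr rfl this, Finset.sum_sub_distrib, ← Finset.sum_mul]
        rw [← Finset.mul_sum]
        ring
      set a : ℝ := (B.card : ℝ) with hadef
      set b : ℝ := (C.card : ℝ) with hbdef
      set sB := ∑ i ∈ B, x i with hsBdef
      set sC := ∑ i ∈ C, x i with hsCdef
      set QB := ∑ i ∈ B, ∑ j ∈ B, f i j with hQBdef
      set QC := ∑ i ∈ C, ∑ j ∈ C, f i j with hQCdef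
      have ha : (1:ℝ) ≤ a := by
        have h1 : 1 ≤ B.card := Finset.card_pos.mpr ⟨i1, hi1B⟩
        rw [hadef]; exact_mod_cast h1
      have hb : (1:ℝ) ≤ b := by
        have h1 : 1 ≤ C.card := Finset.card_pos.mpr ⟨p.2, hj1C⟩
        rw [hbdef]; exact_mod_cast h1
      have hcard : (S.card : ℝ) = a + b := by
        rw [hadef, hbdef, ← Nat.cast_add]
        exact_mod_cast congrArg Nat.cast (Finset.card_filter_add_card_filter_not
          (s := S) (p := fun i => μ < A i1 i)).symm
      have hs : ∑ i ∈ S, x i = sB + sC := hsplit1 x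
      have hβμ : (0:ℝ) ≤ β - μ := by linarith
      have hab0 : (0:ℝ) ≤ a * b := by nlinarith
      -- main algebra
      have E3 : a*b*(sB+sC)^2 ≤ (a+b)*(b*sB^2 + a*sC^2) := by
        nlinarith [sq_nonneg (b*sB - a*sC)]
      have E4 := mul_le_mul_of_nonneg_left E3 hβμ
      have E5 := mul_le_mul_of_nonneg_left IHB (by linarith : (0:ℝ) ≤ b)
      have E6 := mul_le_mul_of_nonneg_left IHC (by linarith : (0:ℝ) ≤ a)
      have E7 := mul_le_mul_of_nonneg_left (add_le_add E5 E6) (by linarith : (0:ℝ) ≤ a + b)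
      have ht : 0 ≤ a*b*(μ*(sB+sC)^2) :=
        mul_nonneg hab0 (mul_nonneg hμ0 (sq_nonneg _))
      have E9 : μ*(a*b*(sB+sC)^2) ≤ (a+b)*(a*b*(μ*(sB+sC)^2)) := by
        calc μ*(a*b*(sB+sC)^2) = 1 * (a*b*(μ*(sB+sC)^2)) := by ring
          _ ≤ (a+b)*(a*b*(μ*(sB+sC)^2)) :=
            mul_le_mul_of_nonneg_right (by linarith) ht
      have big : a*b*(β*(sB+sC)^2) ≤
          a*b*((a+b)*(μ*(sB+sC)^2 + QB + QC)) := by linarith [E4, E7, E9]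
      have hQtot : ∑ i ∈ S, ∑ j ∈ S, A i j * x i * x j =
          μ*(sB+sC)^2 + QB + QC := by
        have := hexpand
        rw [hQsplit] at this
        rw [hs] at this
        linarith
      rw [hs, hcard, hQtot]
      have hab : (0:ℝ) < a * b := mul_pos (by linarith) (by linarith)
      exact le_of_mul_le_mul_left (by linarith [big]) hab

/-- **Theorem (optimality of the constant `1 - 1/n`).**
For the star ultrametric `d i j = 2` (`i ≠ j`), `d i i = 0`, if the matrix with entries
`c - d i j / 2` is positive semidefinite then `c ≥ 1 - 1/n`.  Hence `1 - 1/n` is the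
smallest constant `c` such that `c • J - D/2` is positive semidefinite for every
ultrametric `d` on `n` points with `d i j ≤ 2`. -/
theorem star_metric_optimal_constant (n : ℕ) (hn : 1 ≤ n) :
    (∀ c : ℝ,
      (Matrix.of fun i j : Fin n =>
        c - (if i = j then (0 : ℝ) else 2) / 2).PosSemidef →
      1 - 1 / (n : ℝ) ≤ c) ∧
    IsLeast {c : ℝ | ∀ d : Fin n → Fin n → ℝ,
        (∀ i, d i i = 0) → (∀ i j, d i j = d j i) → (∀ i j, 0 ≤ d i j) →
        (∀ i j k, d i j ≤ max (d i k) (d k j)) → (∀ i j, d i j ≤ 2) →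
        (Matrix.of fun i j => c - d i j / 2).PosSemidef}
      (1 - 1 / (n : ℝ)) := by
  have hn0 : (0:ℝ) < n := by exact_mod_cast hn
  have part1 : ∀ c : ℝ,
      (Matrix.of fun i j : Fin n =>
        c - (if i = j then (0 : ℝ) else 2) / 2).PosSemidef →
      1 - 1 / (n : ℝ) ≤ c := by
    intro c hc
    have h := hc.dotProduct_mulVec_nonneg (fun _ => 1)
    simp only [dotProduct, Matrix.mulVec, Matrix.of_apply, Pi.star_apply, star_one,
      one_mul, mul_one] at h
    have hrow : ∀ i : Fin n, ∑ j : Fin n, (c - (if i = j then (0:ℝ) else 2) / 2)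
        = (n:ℝ) * (c - 1) + 1 := by
      intro i
      have e1 : ∀ j : Fin n, c - (if i = j then (0:ℝ) else 2) / 2
          = (c - 1) + (if i = j then (1:ℝ) else 0) := by
        intro j; split <;> norm_num
      rw [Finset.sum_congr rfl (fun j _ => e1 j), Finset.sum_add_distrib]
      simp [Finset.card_univ, mul_comm]; ring
    have hsum : ∑ i : Fin n, ∑ j : Fin n, (c - (if i = j then (0:ℝ) else 2) / 2)
        = (n:ℝ) * ((n:ℝ) * (c - 1) + 1) := by
      rw [Finset.sum_congr rfl (fun i _ => hrow i), Finset.sum_const, Finset.card_univ,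
        Fintype.card_fin, nsmul_eq_mul]
    have h2 : 0 ≤ (n:ℝ) * ((n:ℝ) * (c - 1) + 1) := by
      rw [← hsum]; exact h
    have h3 : (n:ℝ) * (c - 1) + 1 ≥ 0 := by
      by_contra hcon
      push_neg at hcon
      nlinarith
    have hone : 1 - 1 / (n:ℝ) = ((n:ℝ) - 1) / n := by field_simp
    rw [hone, div_le_iff₀ hn0]
    nlinarith
  refine ⟨part1, ⟨?_, ?_⟩⟩
  · -- membership
    intro d hd0 hdsym hdnn hdultra hd2
    refine Matrix.posSemidef_iff_dotProduct_mulVec.mpr ⟨?_, ?_⟩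
    · ext i j
      simp only [Matrix.conjTranspose_apply, Matrix.of_apply, star_trivial]
      rw [hdsym j i]
    · intro x
      have key := ultra_key (Finset.univ : Finset (Fin n))
        (fun i j => 2 - d i j) 2 x
        (fun i _ j _ => by show 2 - d i j = 2 - d j i; rw [hdsym i j])
        (fun i _ j _ k _ => by
          show min (2 - d i k) (2 - d k j) ≤ 2 - d i j
          rw [min_sub_sub_left]
          exact sub_le_sub_left (hdultra i j k) 2)
        (fun i _ => by show 2 - d i i = 2; rw [hd0 i]; ring)
        (fun i _ j _ => by show (0:ℝ) ≤ 2 - d i j; linarith [hd2 i j])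
        (fun i _ j _ => by show 2 - d i j ≤ 2; linarith [hdnn i j])
      simp only [Finset.card_univ, Fintype.card_fin] at key
      set s := ∑ i : Fin n, x i with hsdef
      set Q := ∑ i : Fin n, ∑ j : Fin n, (2 - d i j) * x i * x j with hQdef
      have hform : star x ⬝ᵥ ((Matrix.of fun i j => (1 - 1/(n:ℝ)) - d i j / 2) *ᵥ x)
          = ∑ i : Fin n, ∑ j : Fin n, ((1 - 1/(n:ℝ)) - d i j / 2) * x i * x j := by
        simp only [dotProduct, Matrix.mulVec, Matrix.of_apply, Pi.star_apply,
          star_trivial, Finset.mul_sum]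
        exact Finset.sum_congr rfl fun i _ => Finset.sum_congr rfl fun j _ => by ring
      have hrel : ∑ i : Fin n, ∑ j : Fin n, ((1 - 1/(n:ℝ)) - d i j / 2) * x i * x j
          = (1/2) * Q - (1/(n:ℝ)) * s^2 := by
        have e1 : ∀ i j : Fin n, ((1 - 1/(n:ℝ)) - d i j / 2) * x i * x j
            = (1/2) * ((2 - d i j) * x i * x j) - (1/(n:ℝ)) * (x i * x j) := fun i j => by
          ring
        have hxx : ∑ i : Fin n, ∑ j : Fin n, x i * x j = s^2 := by
          rw [hsdef, sq, Finset.sum_mul]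
          exact Finset.sum_congr rfl fun i _ => by rw [Finset.mul_sum]
        rw [Finset.sum_congr rfl (fun i _ => Finset.sum_congr rfl (fun j _ => e1 i j))]
        rw [Finset.sum_congr rfl (fun i (_ : i ∈ Finset.univ) => Finset.sum_sub_distrib _ _)]
        rw [Finset.sum_sub_distrib]
        simp only [← Finset.mul_sum]
        rw [hQdef, hsdef, sq, Finset.sum_mul]
      rw [hform, hrel]
      have hinv : (0:ℝ) < 1/(n:ℝ) := by positivity
      have k2 := mul_le_mul_of_nonneg_left key hinv.le
      have hfa : (1/(n:ℝ)) * ((n:ℝ) * Q) = Q := by field_simp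
      rw [hfa] at k2
      linarith
  · -- lower bound
    intro c hc
    refine part1 c ?_
    exact hc (fun i j => if i = j then (0:ℝ) else 2)
      (fun i => by simp)
      (fun i j => by show (if i = j then (0:ℝ) else 2) = (if j = i then (0:ℝ) else 2)
                     simp [eq_comm])
      (fun i j => by show (0:ℝ) ≤ (if i = j then (0:ℝ) else 2); split <;> norm_num)
      (fun i j k => by
        show (if i = j then (0:ℝ) else 2) ≤
          max (if i = k then (0:ℝ) else 2) (if k = j then (0:ℝ) else 2)
        by_cases hij : i = j
        · rw [if_pos hij]
          exact le_max_of_le_left (by split <;> norm_num)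
        · rw [if_neg hij]
          by_cases hik : i = k
          · subst hik
            exact le_max_of_le_right (if_neg hij).ge
          · exact le_max_of_le_left (if_neg hik).ge)
      (fun i j => by show (if i = j then (0:ℝ) else 2) ≤ 2; split <;> norm_num)
end

section
/- Let m ≥ 1, let h : Fin m → Fin m → ℝ be symmetric with 0 ≤ h i j ≤ 1 for all i ≠ j and such that for all pairwise distinct i, j, k the maximum among h i j, h j k, h i k is attained at least twice; let H : Fin m → ℝ satisfy 0 ≤ H i ≤ 1 and H i ≤ h i j for all j ≠ i; and let n₁, …, n_m be positive integers with n = n₁ + ⋯ + n_m. Then the m × m symmetric matrix A with entries A i j = (1 - 1/n) - h i j for i ≠ j and A i i = (1 - 1/n) - (1 - 1/n_i)·H i is positive semidefinite. -/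
open Finset

private lemma equiv_kernel_ineq {S : Type*} [Fintype S] [DecidableEq S]
    (r : S → S → Prop) [DecidableRel r]
    (hrefl : ∀ x, r x x) (hsymm : ∀ x y, r x y → r y x)
    (htrans : ∀ x y z, r x y → r y z → r x z)
    (a : S → ℝ) :
    (∑ x, a x) ^ 2 ≤ (Fintype.card S : ℝ) *
      ∑ x, ∑ y, (if r x y then a x * a y else 0) := by
  classical
  set T : S → ℝ := fun x => ∑ y, if r x y then a y else 0 with hT
  set N : S → ℝ := fun x => ∑ y, if r x y then (1:ℝ) else 0 with hN
  have hN1 : ∀ x, 1 ≤ N x := by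
    intro x
    have h1 : (if r x x then (1:ℝ) else 0) ≤ N x := by
      apply Finset.single_le_sum (f := fun y => if r x y then (1:ℝ) else 0)
      · intro i _; positivity
      · exact mem_univ x
    simpa [hrefl x] using h1
  have hNpos : ∀ x, 0 < N x := fun x => lt_of_lt_of_le one_pos (hN1 x)
  -- invariance on classes
  have hiff : ∀ x y, r x y → ∀ z, r x z ↔ r y z := by
    intro x y hxy z
    exact ⟨fun h => htrans y x z (hsymm x y hxy) h, fun h => htrans x y z hxy h⟩
  have hTinv : ∀ x y, r x y → T x = T y := by
    intro x y hxy
    apply Finset.sum_congr rfl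
    intro z _
    simp [hiff x y hxy z]
  have hNinv : ∀ x y, r x y → N x = N y := by
    intro x y hxy
    apply Finset.sum_congr rfl
    intro z _
    simp [hiff x y hxy z]
  -- (3): ∑ T/N = ∑ a
  have key3 : ∑ x, T x / N x = ∑ x, a x := by
    have : ∀ x, T x / N x = ∑ y, if r x y then a y / N x else 0 := by
      intro x
      rw [hT]
      simp only [Finset.sum_div]
      apply Finset.sum_congr rfl
      intro y _
      split <;> simp
    rw [Finset.sum_congr rfl fun x _ => this x, Finset.sum_comm]
    apply Finset.sum_congr rfl
    intro y _
    have step : ∀ x, (if r x y then a y / N x else 0) = (if r y x then (1:ℝ) else 0) * (a y / N y) := by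
      intro x
      by_cases hxy : r x y
      · rw [if_pos hxy, if_pos (hsymm x y hxy), hNinv x y hxy, one_mul]
      · rw [if_neg hxy, if_neg (fun h => hxy (hsymm y x h)), zero_mul]
    rw [Finset.sum_congr rfl fun x _ => step x, ← Finset.sum_mul]
    rw [show (∑ x, if r y x then (1:ℝ) else 0) = N y from rfl]
    field_simp
    rw [mul_comm, mul_div_assoc, div_self (hNpos y).ne', mul_one]
  -- (4): ∑ a*T = ∑ T^2/N
  have key4 : ∑ x, T x ^ 2 / N x = ∑ x, a x * T x := by
    have : ∀ x, T x ^ 2 / N x = ∑ y, if r x y then a y * (T x / N x) else 0 := by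
      intro x
      have : T x ^ 2 / N x = (T x / N x) * T x := by
        field_simp
      rw [this, hT, Finset.mul_sum]
      apply Finset.sum_congr rfl
      intro y _
      split <;> ring_nf <;> simp
    rw [Finset.sum_congr rfl fun x _ => this x, Finset.sum_comm]
    apply Finset.sum_congr rfl
    intro y _
    have step : ∀ x, (if r x y then a y * (T x / N x) else 0)
        = (if r y x then (1:ℝ) else 0) * (a y * (T y / N y)) := by
      intro x
      by_cases hxy : r x y
      · rw [if_pos hxy, if_pos (hsymm x y hxy), hNinv x y hxy, hTinv x y hxy, one_mul]
      · rw [if_neg hxy, if_neg (fun h => hxy (hsymm y x h)), zero_mul]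
    rw [Finset.sum_congr rfl fun x _ => step x, ← Finset.sum_mul]
    rw [show (∑ x, if r y x then (1:ℝ) else 0) = N y from rfl]
    have hNy := (hNpos y).ne'
    field_simp
  -- RHS equals ∑ a*T
  have hrhs : ∑ x, ∑ y, (if r x y then a x * a y else 0) = ∑ x, a x * T x := by
    apply Finset.sum_congr rfl
    intro x _
    rw [hT, Finset.mul_sum]
    apply Finset.sum_congr rfl
    intro y _
    split <;> simp
  rw [hrhs, ← key4, ← key3]
  -- Cauchy-Schwarz and N ≥ 1
  calc (∑ x, T x / N x) ^ 2 ≤ (Fintype.card S : ℝ) * ∑ x, (T x / N x) ^ 2 := by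
        simpa using sq_sum_le_card_mul_sum_sq (s := (univ : Finset S)) (f := fun x => T x / N x)
    _ ≤ (Fintype.card S : ℝ) * ∑ x, T x ^ 2 / N x := by
        apply mul_le_mul_of_nonneg_left _ (by positivity)
        apply Finset.sum_le_sum
        intro x _
        rw [div_pow]
        apply div_le_div_of_nonneg_left (by positivity) (hNpos x)
        nlinarith [hN1 x, hNpos x]

private lemma ultra_form_aux {S : Type*} [Fintype S] [DecidableEq S] [Nonempty S] :
    ∀ (k : ℕ) (d : S → S → ℝ),
      (Finset.image (fun p : S × S => d p.1 p.2) Finset.univ).card ≤ k →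
      (∀ x y, d x y = d y x) → (∀ x, d x x = 0) → (∀ x y, 0 ≤ d x y) →
      (∀ x y z, d x z ≤ max (d x y) (d y z)) →
      ∀ (t : ℝ), (∀ x y, d x y ≤ t) → ∀ (a : S → ℝ),
      t * (∑ x, a x) ^ 2 / (Fintype.card S : ℝ) ≤ ∑ x, ∑ y, a x * a y * (t - d x y) := by
  intro k
  induction k with
  | zero =>
    intro d hcard _ _ _ _ _ _ _
    exfalso
    have hne : (Finset.image (fun p : S × S => d p.1 p.2) Finset.univ).Nonempty := by
      apply Finset.Nonempty.image
      simp [Finset.univ_nonempty]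
    have := Finset.card_pos.mpr hne
    omega
  | succ k ih =>
    intro d hcard hsym hdiag hnn hult t ht a
    obtain ⟨x0⟩ := ‹Nonempty S›
    have hn1 : (1:ℝ) ≤ (Fintype.card S : ℝ) := by
      exact_mod_cast Fintype.card_pos
    have hn : (0:ℝ) < (Fintype.card S : ℝ) := lt_of_lt_of_le one_pos hn1
    have ht0 : 0 ≤ t := le_trans (hnn x0 x0) (ht x0 x0)
    set V := Finset.image (fun p : S × S => d p.1 p.2) Finset.univ with hV
    have hVne : V.Nonempty := by
      apply Finset.Nonempty.image
      simp [Finset.univ_nonempty]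
    set v := V.max' hVne with hv
    have hvmemV : v ∈ V := V.max'_mem hVne
    have hmemd : ∀ x y, d x y ∈ V := fun x y =>
      Finset.mem_image.mpr ⟨(x, y), Finset.mem_univ _, rfl⟩
    have hleV : ∀ u ∈ V, u ≤ v := fun u hu => V.le_max' u hu
    by_cases hv0 : v ≤ 0
    · -- all distances zero
      have hd0 : ∀ x y, d x y = 0 := fun x y =>
        le_antisymm (le_trans (hleV _ (hmemd x y)) hv0) (hnn x y)
      have key : ∑ x, ∑ y, a x * a y * (t - d x y) = t * ((∑ x, a x) * (∑ x, a x)) := by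
        rw [Finset.sum_mul_sum, Finset.mul_sum]
        apply Finset.sum_congr rfl; intro x _
        rw [Finset.mul_sum]
        apply Finset.sum_congr rfl; intro y _
        rw [hd0]; ring
      rw [key]
      have h2 := div_le_self (mul_nonneg ht0 (mul_self_nonneg (∑ x, a x))) hn1
      calc t * (∑ x, a x) ^ 2 / (Fintype.card S : ℝ)
          = t * ((∑ x, a x) * (∑ x, a x)) / (Fintype.card S : ℝ) := by ring_nf
        _ ≤ t * ((∑ x, a x) * (∑ x, a x)) := h2
    · push_neg at hv0
      have h0V : (0:ℝ) ∈ V := by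
        have := hmemd x0 x0
        rwa [hdiag x0] at this
      set W := V.filter (fun u => u < v) with hW
      have hWne : W.Nonempty := ⟨0, Finset.mem_filter.mpr ⟨h0V, hv0⟩⟩
      set v₂ := W.max' hWne with hv₂
      have hv2W : v₂ ∈ W := W.max'_mem hWne
      have hv2V : v₂ ∈ V := (Finset.mem_filter.mp hv2W).1
      have hv2v : v₂ < v := (Finset.mem_filter.mp hv2W).2
      have hv2nn : 0 ≤ v₂ := W.le_max' 0 (Finset.mem_filter.mpr ⟨h0V, hv0⟩)
      have hdichot : ∀ x y, d x y ≤ v₂ ∨ d x y = v := by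
        intro x y
        rcases eq_or_lt_of_le (hleV _ (hmemd x y)) with h | h
        · exact Or.inr h
        · exact Or.inl (W.le_max' _ (Finset.mem_filter.mpr ⟨hmemd x y, h⟩))
      have hvt : v ≤ t := by
        obtain ⟨p, _, hp⟩ := Finset.mem_image.mp hvmemV
        rw [← hp]; exact ht _ _
      set d' : S → S → ℝ := fun x y => min (d x y) v₂ with hd'
      set t' : ℝ := t - (v - v₂) with ht'
      -- properties of d'
      have hd'sym : ∀ x y, d' x y = d' y x := by intro x y; simp [hd', hsym x y]
      have hd'diag : ∀ x, d' x x = 0 := by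
        intro x; simp [hd', hdiag x, min_eq_left hv2nn]
      have hd'nn : ∀ x y, 0 ≤ d' x y := fun x y => le_min (hnn x y) hv2nn
      have hd'ult : ∀ x y z, d' x z ≤ max (d' x y) (d' y z) := by
        intro x y z
        rcases le_max_iff.mp (hult x y z) with hc | hc
        · exact le_max_of_le_left (min_le_min hc le_rfl)
        · exact le_max_of_le_right (min_le_min hc le_rfl)
      have hd'le : ∀ x y, d' x y ≤ t' := by
        intro x y
        calc d' x y ≤ v₂ := min_le_right _ _
          _ ≤ t' := by rw [ht']; linarith
      have hcard' : (Finset.image (fun p : S × S => d' p.1 p.2) Finset.univ).card ≤ k := by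
        have hsub : Finset.image (fun p : S × S => d' p.1 p.2) Finset.univ ⊆ V.erase v := by
          intro u hu
          obtain ⟨p, _, hp⟩ := Finset.mem_image.mp hu
          rcases hdichot p.1 p.2 with hc | hc
          · rw [← hp]
            apply Finset.mem_erase.mpr
            constructor
            · rw [hd']; simp only
              rw [min_eq_left hc]
              exact ne_of_lt (lt_of_le_of_lt hc hv2v)
            · rw [hd']; simp only
              rw [min_eq_left hc]
              exact hmemd _ _
          · rw [← hp]
            have : d' p.1 p.2 = v₂ := by
              rw [hd']; simp only; rw [hc]
              exact min_eq_right (le_of_lt hv2v)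
            rw [this]
            exact Finset.mem_erase.mpr ⟨ne_of_lt hv2v, hv2V⟩
        have := Finset.card_le_card hsub
        have h2 := Finset.card_erase_of_mem hvmemV
        omega
      have hIH := ih d' hcard' hd'sym hd'diag hd'nn hd'ult t' hd'le a
      -- kernel inequality
      have hker := equiv_kernel_ineq (fun x y => d x y ≤ v₂)
        (fun x => le_trans (le_of_eq (hdiag x)) hv2nn)
        (fun x y hxy => le_trans (le_of_eq (hsym y x)) hxy)
        (fun x y z hxy hyz => le_trans (hult x y z) (max_le hxy hyz)) a
      set K := ∑ x, ∑ y, (if d x y ≤ v₂ then a x * a y else 0) with hK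
      set Q' := ∑ x, ∑ y, a x * a y * (t' - d' x y) with hQ'
      -- decomposition
      have hdecomp : ∑ x, ∑ y, a x * a y * (t - d x y) = Q' + (v - v₂) * K := by
        rw [hQ', hK, Finset.mul_sum, ← Finset.sum_add_distrib]
        apply Finset.sum_congr rfl; intro x _
        rw [Finset.mul_sum, ← Finset.sum_add_distrib]
        apply Finset.sum_congr rfl; intro y _
        by_cases hxy : d x y ≤ v₂
        · rw [if_pos hxy, hd']; simp only; rw [min_eq_left hxy, ht']; ring
        · have hdv : d x y = v := (hdichot x y).resolve_left hxy
          rw [if_neg hxy, hd']; simp only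
          rw [hdv, min_eq_right (le_of_lt hv2v), ht']; ring
      rw [hdecomp]
      have hKge : (∑ x, a x) ^ 2 / (Fintype.card S : ℝ) ≤ K := by
        rw [div_le_iff₀ hn, mul_comm]; exact hker
      have hsplit : t * (∑ x, a x) ^ 2 / (Fintype.card S : ℝ)
          = t' * (∑ x, a x) ^ 2 / (Fintype.card S : ℝ)
            + (v - v₂) * ((∑ x, a x) ^ 2 / (Fintype.card S : ℝ)) := by
        field_simp; ring
      rw [hsplit]
      have h3 : (v - v₂) * ((∑ x, a x) ^ 2 / (Fintype.card S : ℝ)) ≤ (v - v₂) * K :=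
        mul_le_mul_of_nonneg_left hKge (by linarith)
      linarith

/-- **Theorem (upper-subtree PSD inequality for ultrametric trees, matrix form).**
Given symmetric data `h i j ∈ [0,1]` (`i ≠ j`) satisfying the three-point condition
(the maximum among `h i j, h j k, h i k` is attained at least twice for pairwise
distinct `i, j, k`), heights `H i ∈ [0,1]` with `H i ≤ h i j` for `j ≠ i`, and positive
integers `n i` with `n = ∑ n i`, the `m × m` matrix with off-diagonal entries
`(1 - 1/n) - h i j` and diagonal entries `(1 - 1/n) - (1 - 1/(n i)) * H i` is
positive semidefinite. -/
theorem upper_subtree_psd (m : ℕ) (hm : 1 ≤ m)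
    (h : Fin m → Fin m → ℝ) (H : Fin m → ℝ) (nn : Fin m → ℕ)
    (h_symm : ∀ i j, h i j = h j i)
    (h_nonneg : ∀ i j, i ≠ j → 0 ≤ h i j)
    (h_le_one : ∀ i j, i ≠ j → h i j ≤ 1)
    (h_max_twice : ∀ i j k, i ≠ j → j ≠ k → i ≠ k →
      (h i j = max (h i j) (max (h j k) (h i k)) ∧
        h j k = max (h i j) (max (h j k) (h i k))) ∨
      (h i j = max (h i j) (max (h j k) (h i k)) ∧
        h i k = max (h i j) (max (h j k) (h i k))) ∨
      (h j k = max (h i j) (max (h j k) (h i k)) ∧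
        h i k = max (h i j) (max (h j k) (h i k))))
    (H_nonneg : ∀ i, 0 ≤ H i) (H_le_one : ∀ i, H i ≤ 1)
    (H_le_h : ∀ i j, i ≠ j → H i ≤ h i j)
    (nn_pos : ∀ i, 1 ≤ nn i) :
    (Matrix.of fun i j : Fin m =>
      if i = j then
        (1 - 1 / ((∑ t, nn t : ℕ) : ℝ)) - (1 - 1 / (nn i : ℝ)) * H i
      else
        (1 - 1 / ((∑ t, nn t : ℕ) : ℝ)) - h i j).PosSemidef := by
  classical
  have hmne : Nonempty (Fin m) := ⟨⟨0, hm⟩⟩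
  have hnnR : ∀ i, (0:ℝ) < (nn i : ℝ) := fun i => by exact_mod_cast nn_pos i
  have hnposN : 0 < ∑ t, nn t := by
    calc 0 < nn ⟨0, hm⟩ := nn_pos _
      _ ≤ ∑ t, nn t := Finset.single_le_sum (fun i _ => Nat.zero_le _) (mem_univ _)
  have hnR : (0:ℝ) < ((∑ t, nn t : ℕ) : ℝ) := by exact_mod_cast hnposN
  constructor
  · -- Hermitian
    ext i j
    simp only [Matrix.conjTranspose_apply, Matrix.of_apply, star_trivial]
    by_cases hij : i = j
    · subst hij; simp
    · rw [if_neg (fun e => hij e.symm), if_neg hij, h_symm]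
  · intro w0
    -- the blow-up space
    have hSne : Nonempty ((i : Fin m) × Fin (nn i)) := ⟨⟨⟨0, hm⟩, ⟨0, nn_pos _⟩⟩⟩
    set d : ((i : Fin m) × Fin (nn i)) → ((i : Fin m) × Fin (nn i)) → ℝ := fun x y =>
      if x = y then 0 else (if x.1 = y.1 then H x.1 else h x.1 y.1) with hd
    have hd_same : ∀ (i : Fin m) (p q : Fin (nn i)),
        d ⟨i, p⟩ ⟨i, q⟩ = if p = q then 0 else H i := by
      intro i p q
      rw [hd]; dsimp only
      by_cases hpq : p = q
      · subst hpq; simp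
      · have hne : (⟨i, p⟩ : (i : Fin m) × Fin (nn i)) ≠ ⟨i, q⟩ := by
          simp [Sigma.mk.inj_iff, hpq]
        rw [if_neg hne, if_pos rfl, if_neg hpq]
    have hd_diff : ∀ (i j : Fin m) (p : Fin (nn i)) (q : Fin (nn j)), i ≠ j →
        d ⟨i, p⟩ ⟨j, q⟩ = h i j := by
      intro i j p q hij
      have hne : (⟨i, p⟩ : (i : Fin m) × Fin (nn i)) ≠ ⟨j, q⟩ := fun e =>
        hij (congrArg Sigma.fst e)
      rw [hd]; dsimp only
      rw [if_neg hne, if_neg hij]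
    have hd_sym : ∀ x y, d x y = d y x := by
      rintro ⟨i, p⟩ ⟨j, q⟩
      by_cases hij : i = j
      · subst hij
        rw [hd_same, hd_same]
        by_cases hpq : p = q
        · subst hpq; simp
        · rw [if_neg hpq, if_neg (fun e => hpq e.symm)]
      · rw [hd_diff i j p q hij, hd_diff j i q p (fun e => hij e.symm), h_symm]
    have hd_diag : ∀ x, d x x = 0 := by intro x; rw [hd]; simp
    have hd_nn : ∀ x y, 0 ≤ d x y := by
      rintro ⟨i, p⟩ ⟨j, q⟩
      by_cases hij : i = j
      · subst hij
        rw [hd_same]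
        split_ifs
        · exact le_refl 0
        · exact H_nonneg i
      · rw [hd_diff i j p q hij]; exact h_nonneg i j hij
    have hd_le1 : ∀ x y, d x y ≤ 1 := by
      rintro ⟨i, p⟩ ⟨j, q⟩
      by_cases hij : i = j
      · subst hij
        rw [hd_same]
        split_ifs
        · exact zero_le_one
        · exact H_le_one i
      · rw [hd_diff i j p q hij]; exact h_le_one i j hij
    have hd_ult : ∀ x y z, d x z ≤ max (d x y) (d y z) := by
      rintro ⟨i, p⟩ ⟨j, q⟩ ⟨k, r⟩
      by_cases hij : i = j
      · subst hij
        by_cases hik : i = k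
        · subst hik
          rw [hd_same, hd_same, hd_same]
          have h0 : 0 ≤ H i := H_nonneg i
          by_cases hpr : p = r
          · rw [if_pos hpr]
            split_ifs <;> simp [le_max_iff, h0, le_refl]
          · rw [if_neg hpr]
            by_cases hpq : p = q
            · have hqr : ¬ q = r := fun e => hpr (hpq.trans e)
              rw [if_neg hqr]
              exact le_max_right _ _
            · rw [if_neg hpq]
              exact le_max_left _ _
        · rw [hd_diff i k p r hik, hd_diff i k q r hik]
          exact le_max_right _ _
      · by_cases hjk : j = k
        · subst hjk
          rw [hd_diff i j p r hij, hd_diff i j p q hij]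
          exact le_max_left _ _
        · by_cases hik : i = k
          · subst hik
            rw [hd_same, hd_diff i j p q hij]
            apply le_max_of_le_left
            split_ifs
            · exact h_nonneg i j hij
            · exact H_le_h i j hij
          · rw [hd_diff i k p r hik, hd_diff i j p q hij, hd_diff j k q r hjk]
            rcases h_max_twice i j k hij hjk hik with ⟨e1, e2⟩ | ⟨e1, e3⟩ | ⟨e2, e3⟩
            · have : h i k ≤ h i j := by
                rw [e1]; exact le_max_of_le_right (le_max_right _ _)
              exact le_trans this (le_max_left _ _)
            · have : h i k = h i j := e3.trans e1.symm
              rw [this]; exact le_max_left _ _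
            · have : h i k = h j k := e3.trans e2.symm
              rw [this]; exact le_max_right _ _
    set a : ((i : Fin m) × Fin (nn i)) → ℝ := fun x => w0 x.1 / (nn x.1 : ℝ) with ha
    have main := ultra_form_aux
      ((Finset.image (fun p : (((i : Fin m) × Fin (nn i))) × ((i : Fin m) × Fin (nn i)) =>
        d p.1 p.2) Finset.univ).card) d le_rfl hd_sym hd_diag hd_nn hd_ult 1 hd_le1 a
    have hcardS : (Fintype.card ((i : Fin m) × Fin (nn i)) : ℝ) = ((∑ t, nn t : ℕ) : ℝ) := by
      simp [Fintype.card_sigma]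
    -- sum of a
    have hsumA : ∑ x : (i : Fin m) × Fin (nn i), a x = ∑ i, w0 i := by
      rw [← Finset.univ_sigma_univ, Finset.sum_sigma]
      apply Finset.sum_congr rfl
      intro i _
      rw [ha]; dsimp only
      rw [Finset.sum_const, Finset.card_univ, Fintype.card_fin, nsmul_eq_mul]
      exact mul_div_cancel₀ _ (hnnR i).ne'
    -- the double sum
    have hQ : ∑ x : (i : Fin m) × Fin (nn i), ∑ y : (i : Fin m) × Fin (nn i),
        a x * a y * (1 - d x y)
        = ∑ i, ∑ j, w0 i * w0 j *
          (if i = j then 1 - (1 - 1/(nn i : ℝ)) * H i else 1 - h i j) := by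
      rw [← Finset.univ_sigma_univ, Finset.sum_sigma]
      apply Finset.sum_congr rfl
      intro i _
      have inner2 : ∀ p : Fin (nn i),
          (∑ y ∈ Finset.univ.sigma (fun _ => Finset.univ),
            a ⟨i, p⟩ * a y * (1 - d ⟨i, p⟩ y))
          = ∑ j, ∑ q : Fin (nn j), a ⟨i, p⟩ * a ⟨j, q⟩ * (1 - d ⟨i, p⟩ ⟨j, q⟩) :=
        fun p => Finset.sum_sigma _ _ _
      rw [Finset.sum_congr rfl fun p _ => inner2 p, Finset.sum_comm]
      apply Finset.sum_congr rfl
      intro j _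
      by_cases hij : i = j
      · subst hij
        rw [if_pos rfl]
        have hterm : ∀ p q : Fin (nn i),
            a ⟨i, p⟩ * a ⟨i, q⟩ * (1 - d ⟨i, p⟩ ⟨i, q⟩)
            = (w0 i / (nn i : ℝ)) * (w0 i / (nn i : ℝ)) * (1 - H i)
              + (if p = q then (w0 i / (nn i : ℝ)) * (w0 i / (nn i : ℝ)) * H i else 0) := by
          intro p q
          rw [hd_same, ha]; dsimp only
          split_ifs with hpq <;> ring
        rw [Finset.sum_congr rfl fun p _ => Finset.sum_congr rfl fun q _ => hterm p q]
        have hinner : ∀ p : Fin (nn i),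
            ∑ q : Fin (nn i), ((w0 i / (nn i : ℝ)) * (w0 i / (nn i : ℝ)) * (1 - H i)
              + (if p = q then (w0 i / (nn i : ℝ)) * (w0 i / (nn i : ℝ)) * H i else 0))
            = (nn i : ℝ) * ((w0 i / (nn i : ℝ)) * (w0 i / (nn i : ℝ)) * (1 - H i))
              + (w0 i / (nn i : ℝ)) * (w0 i / (nn i : ℝ)) * H i := by
          intro p
          rw [Finset.sum_add_distrib, Finset.sum_const, Finset.card_univ, Fintype.card_fin,
            nsmul_eq_mul, Finset.sum_ite_eq, if_pos (Finset.mem_univ p)]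
        rw [Finset.sum_congr rfl fun p _ => hinner p, Finset.sum_const, Finset.card_univ,
          Fintype.card_fin, nsmul_eq_mul]
        have hni := (hnnR i).ne'
        field_simp
        ring
      · rw [if_neg hij]
        have hterm : ∀ (p : Fin (nn i)) (q : Fin (nn j)),
            a ⟨i, p⟩ * a ⟨j, q⟩ * (1 - d ⟨i, p⟩ ⟨j, q⟩)
            = (w0 i / (nn i : ℝ)) * (w0 j / (nn j : ℝ)) * (1 - h i j) := by
          intro p q
          rw [hd_diff i j p q hij, ha]
        rw [Finset.sum_congr rfl fun p _ => Finset.sum_congr rfl fun q _ => hterm p q]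
        rw [Finset.sum_const, Finset.card_univ, Fintype.card_fin, nsmul_eq_mul,
          Finset.sum_const, Finset.card_univ, Fintype.card_fin, nsmul_eq_mul]
        have hni := (hnnR i).ne'
        have hnj := (hnnR j).ne'
        field_simp
    -- final assembly
    have hfin : (0:ℝ) ≤ ∑ i, ∑ j, w0 i * ((if i = j then
          (1 - 1 / ((∑ t, nn t : ℕ) : ℝ)) - (1 - 1 / (nn i : ℝ)) * H i
        else
          (1 - 1 / ((∑ t, nn t : ℕ) : ℝ)) - h i j) * w0 j) := by
      have hsplit : ∀ i j : Fin m, w0 i * ((if i = j then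
              (1 - 1 / ((∑ t, nn t : ℕ) : ℝ)) - (1 - 1 / (nn i : ℝ)) * H i
            else
              (1 - 1 / ((∑ t, nn t : ℕ) : ℝ)) - h i j) * w0 j)
          = w0 i * w0 j * (if i = j then 1 - (1 - 1/(nn i : ℝ)) * H i else 1 - h i j)
            - (1 / ((∑ t, nn t : ℕ) : ℝ)) * (w0 i * w0 j) := by
        intro i j
        split_ifs <;> ring
      rw [Finset.sum_congr rfl fun i _ => Finset.sum_congr rfl fun j _ => hsplit i j]
      have hsum_split : ∑ i, ∑ j, (w0 i * w0 j * (if i = j then 1 - (1 - 1/(nn i : ℝ)) * H i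
            else 1 - h i j) - (1 / ((∑ t, nn t : ℕ) : ℝ)) * (w0 i * w0 j))
          = (∑ i, ∑ j, w0 i * w0 j * (if i = j then 1 - (1 - 1/(nn i : ℝ)) * H i
            else 1 - h i j)) - (1 / ((∑ t, nn t : ℕ) : ℝ)) * ((∑ i, w0 i) * (∑ j, w0 j)) := by
        rw [Finset.sum_mul_sum, Finset.mul_sum, ← Finset.sum_sub_distrib]
        apply Finset.sum_congr rfl
        intro i _
        rw [Finset.mul_sum, ← Finset.sum_sub_distrib]
      rw [hsum_split]
      rw [hsumA, hcardS, hQ] at main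
      have e1 : 1 * (∑ i, w0 i) ^ 2 / ((∑ t, nn t : ℕ) : ℝ)
          = (1 / ((∑ t, nn t : ℕ) : ℝ)) * ((∑ i, w0 i) * (∑ j, w0 j)) := by
        field_simp
      rw [e1] at main
      linarith
    simp only [dotProduct, Matrix.mulVec, Matrix.of_apply, Pi.star_apply, star_trivial]
    calc (0:ℝ) ≤ ∑ i, ∑ j, w0 i * ((if i = j then
          (1 - 1 / ((∑ t, nn t : ℕ) : ℝ)) - (1 - 1 / (nn i : ℝ)) * H i
        else
          (1 - 1 / ((∑ t, nn t : ℕ) : ℝ)) - h i j) * w0 j) := hfin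
      _ = _ := by
        rw [Finsupp.sum_fintype]
        · apply Finset.sum_congr rfl
          intro i _
          rw [Finsupp.sum_fintype]
          · apply Finset.sum_congr rfl
            intro j _
            ring
          · intro j; simp
        · intro i; simp
end

section
/- Let n ≥ 1 and let d : Fin n → Fin n → ℝ be an ultrametric with d i j ≤ 2 for all i, j and d i j > 0 for all i ≠ j. Let c_d be the infimum of the set of real numbers c ≥ 0 such that the n × n matrix with entries c - d i j / 2 is positive semidefinite (this infimum exists and satisfies c_d ≤ 1 - 1/n). Then c_d = 1 - 1/n if and only if d i j = 2 for all i ≠ j. -/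
set_option maxHeartbeats 1000000

open Finset

/-- Harmonic mean monotonicity. -/
lemma harm_mono (a b t₁ t₂ : ℝ) (ha : 0 < a) (hb : 0 < b) (h1 : a ≤ t₁) (h2 : b ≤ t₂) :
    a * b / (a + b) ≤ t₁ * t₂ / (t₁ + t₂) := by
  have ht1 : 0 < t₁ := ha.trans_le h1
  have ht2 : 0 < t₂ := hb.trans_le h2
  rw [div_le_div_iff₀ (by positivity) (by positivity)]
  nlinarith [mul_nonneg (mul_nonneg ht1.le ha.le) (sub_nonneg.2 h2),
    mul_nonneg (mul_nonneg ht2.le hb.le) (sub_nonneg.2 h1)]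

lemma harm_mono_strict (a b t₁ t₂ : ℝ) (ha : 0 < a) (hb : 0 < b) (h1 : a ≤ t₁) (h2 : b ≤ t₂)
    (hs : a < t₁ ∨ b < t₂) :
    a * b / (a + b) < t₁ * t₂ / (t₁ + t₂) := by
  have ht1 : 0 < t₁ := ha.trans_le h1
  have ht2 : 0 < t₂ := hb.trans_le h2
  rw [div_lt_div_iff₀ (by positivity) (by positivity)]
  rcases hs with hs | hs
  · nlinarith [mul_nonneg (mul_nonneg ht1.le ha.le) (sub_nonneg.2 h2),
      mul_pos (mul_pos ht2 hb) (sub_pos.2 hs)]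
  · nlinarith [mul_nonneg (mul_nonneg ht2.le hb.le) (sub_nonneg.2 h1),
      mul_pos (mul_pos ht1 ha) (sub_pos.2 hs)]

/-- harmonic combination of two quadratic bounds -/
lemma harm_quad (t₁ t₂ a b : ℝ) (h1 : 0 < t₁) (h2 : 0 < t₂) :
    t₁ * t₂ / (t₁ + t₂) * (a + b) ^ 2 ≤ t₁ * a ^ 2 + t₂ * b ^ 2 := by
  rw [div_mul_eq_mul_div, div_le_iff₀ (by positivity)]
  nlinarith [sq_nonneg (t₁ * a - t₂ * b)]

lemma harm_eq (D' a b : ℝ) (hD : 0 < D') (ha : 0 < a) (hb : 0 < b) :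
    D' / (2 * a) * (D' / (2 * b)) / (D' / (2 * a) + D' / (2 * b)) = D' / (2 * (a + b)) := by
  field_simp
  ring

/-- The key structural lemma about ultrametric quadratic forms. -/
lemma key_lemma (n : ℕ) (d : Fin n → Fin n → ℝ)
    (h_diag : ∀ i, d i i = 0)
    (h_symm : ∀ i j, d i j = d j i)
    (h_ultra : ∀ i j k, d i j ≤ max (d i k) (d k j))
    (h_pos : ∀ i j, i ≠ j → 0 < d i j) :
    ∀ (m : ℕ) (s : Finset (Fin n)), s.card = m → s.Nonempty → ∀ D : ℝ, 0 < D →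
    (∀ i ∈ s, ∀ j ∈ s, d i j ≤ D) →
    ∃ t : ℝ, D / (2 * m) ≤ t ∧
      ((∃ i ∈ s, ∃ j ∈ s, i ≠ j ∧ d i j < D) → D / (2 * m) < t) ∧
      ∀ x : Fin n → ℝ,
        t * (∑ i ∈ s, x i) ^ 2 ≤ ∑ i ∈ s, ∑ j ∈ s, x i * x j * ((D - d i j) / 2) := by
  intro m
  induction m using Nat.strong_induction_on with
  | _ m IH =>
    intro s hcard hne D hD hbound
    have hm1 : 1 ≤ m := hcard ▸ Finset.Nonempty.card_pos hne
    rcases eq_or_lt_of_le hm1 with h1 | h2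
    · -- card = 1
      obtain ⟨i, hi⟩ := Finset.card_eq_one.mp (hcard.trans h1.symm)
      subst hi
      refine ⟨D / 2, by norm_num [← h1], ?_, ?_⟩
      · rintro ⟨a, ha, b, hb, hab, -⟩
        simp only [Finset.mem_singleton] at ha hb
        exact absurd (ha.trans hb.symm) hab
      · intro x
        simp [h_diag, mul_comm]
        ring_nf
        nlinarith [sq_nonneg (x i)]
    · -- card ≥ 2
      classical
      obtain ⟨a0, ha0, b0, hb0, hab0⟩ := Finset.one_lt_card.mp (hcard ▸ h2)
      have hod : s.offDiag.Nonempty := ⟨(a0, b0), Finset.mem_offDiag.2 ⟨ha0, hb0, hab0⟩⟩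
      set D' := s.offDiag.sup' hod (fun p => d p.1 p.2) with hD'def
      obtain ⟨p₀, hp₀mem, hp₀⟩ := Finset.exists_mem_eq_sup' hod (fun p => d p.1 p.2)
      rw [Finset.mem_offDiag] at hp₀mem
      obtain ⟨hi₀s, hj₀s, hne₀⟩ := hp₀mem
      have hp₀' : D' = d p₀.1 p₀.2 := hp₀
      have hD'pos : 0 < D' := by rw [hp₀']; exact h_pos _ _ hne₀
      have hD'le : D' ≤ D := by rw [hp₀']; exact hbound _ hi₀s _ hj₀s
      have hle' : ∀ i ∈ s, ∀ j ∈ s, d i j ≤ D' := by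
        intro i hi j hj
        by_cases hij : i = j
        · rw [hij, h_diag]; exact hD'pos.le
        · exact Finset.le_sup' (f := fun p : Fin n × Fin n => d p.1 p.2)
            (show ((i, j) : Fin n × Fin n) ∈ s.offDiag from Finset.mem_offDiag.2 ⟨hi, hj, hij⟩)
      set C := s.filter (fun j => d p₀.1 j < D') with hCdef
      have hCs : C ⊆ s := Finset.filter_subset _ _
      have hi₀C : p₀.1 ∈ C := Finset.mem_filter.2 ⟨hi₀s, by rw [h_diag]; exact hD'pos⟩
      have hj₀ : p₀.2 ∈ s \ C := by
        rw [Finset.mem_sdiff]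
        refine ⟨hj₀s, fun h => absurd ((Finset.mem_filter.1 h).2) ?_⟩
        rw [← hp₀']; exact lt_irrefl _
      have hCne : C.Nonempty := ⟨_, hi₀C⟩
      have hs₂ne : (s \ C).Nonempty := ⟨_, hj₀⟩
      have hm : (s \ C).card + C.card = m := hcard ▸ Finset.card_sdiff_add_card_eq_card hCs
      have hm₁pos : 0 < C.card := hCne.card_pos
      have hm₂pos : 0 < (s \ C).card := hs₂ne.card_pos
      have hm₁lt : C.card < m := by omega
      have hm₂lt : (s \ C).card < m := by omega
      -- within-C distances are < D'
      have hCstrict : ∀ i ∈ C, ∀ j ∈ C, i ≠ j → d i j < D' := by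
        intro i hi j hj hij
        have h1 : d p₀.1 i < D' := (Finset.mem_filter.1 hi).2
        have h1' : d i p₀.1 < D' := (h_symm i p₀.1) ▸ h1
        have h2' : d p₀.1 j < D' := (Finset.mem_filter.1 hj).2
        exact lt_of_le_of_lt (h_ultra i j p₀.1) (max_lt h1' h2')
      -- cross distances equal D'
      have hcross : ∀ i ∈ C, ∀ j ∈ s \ C, d i j = D' := by
        intro i hi j hj
        rw [Finset.mem_sdiff] at hj
        refine le_antisymm (hle' i (hCs hi) j hj.1) ?_
        by_contra hlt
        push_neg at hlt
        apply hj.2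
        refine Finset.mem_filter.2 ⟨hj.1, ?_⟩
        have h1 : d p₀.1 i < D' := (Finset.mem_filter.1 hi).2
        exact lt_of_le_of_lt (h_ultra p₀.1 j i) (max_lt h1 ((h_symm i j) ▸ hlt))
      have hboundC : ∀ i ∈ C, ∀ j ∈ C, d i j ≤ D' := fun i hi j hj => hle' i (hCs hi) j (hCs hj)
      have hbound₂ : ∀ i ∈ s \ C, ∀ j ∈ s \ C, d i j ≤ D' := fun i hi j hj =>
        hle' i (Finset.mem_sdiff.1 hi).1 j (Finset.mem_sdiff.1 hj).1
      obtain ⟨t₁, ht₁ge, ht₁st, ht₁Q⟩ := IH C.card hm₁lt C rfl hCne D' hD'pos hboundC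
      obtain ⟨t₂, ht₂ge, ht₂st, ht₂Q⟩ := IH (s \ C).card hm₂lt (s \ C) rfl hs₂ne D' hD'pos hbound₂
      have hm₁R : (0:ℝ) < C.card := by exact_mod_cast hm₁pos
      have hm₂R : (0:ℝ) < (s \ C).card := by exact_mod_cast hm₂pos
      have hmR : ((m:ℝ)) = (C.card : ℝ) + ((s \ C).card : ℝ) := by
        have := hm; push_cast [← this]; ring
      have hapos : (0:ℝ) < D' / (2 * C.card) := div_pos hD'pos (mul_pos two_pos hm₁R)
      have hbpos : (0:ℝ) < D' / (2 * (s \ C).card) := div_pos hD'pos (mul_pos two_pos hm₂R)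
      have t₁pos : 0 < t₁ := lt_of_lt_of_le hapos ht₁ge
      have t₂pos : 0 < t₂ := lt_of_lt_of_le hbpos ht₂ge
      have hmRpos : (0:ℝ) < m := by linarith
      have hab : D' / (2 * C.card) * (D' / (2 * (s \ C).card)) /
          (D' / (2 * C.card) + D' / (2 * (s \ C).card)) = D' / (2 * m) := by
        rw [hmR]; exact harm_eq D' _ _ hD'pos hm₁R hm₂R
      -- splitting identity
      have hsplit : ∀ x : Fin n → ℝ,
          ∑ i ∈ s, ∑ j ∈ s, x i * x j * ((D - d i j) / 2) =
          (D - D') / 2 * (∑ i ∈ s, x i) ^ 2 +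
          (∑ i ∈ C, ∑ j ∈ C, x i * x j * ((D' - d i j) / 2)) +
          (∑ i ∈ s \ C, ∑ j ∈ s \ C, x i * x j * ((D' - d i j) / 2)) := by
        intro x
        have e1 : ∑ i ∈ s, ∑ j ∈ s, x i * x j * ((D - d i j) / 2) =
            (D - D') / 2 * (∑ i ∈ s, x i) ^ 2 +
            ∑ i ∈ s, ∑ j ∈ s, x i * x j * ((D' - d i j) / 2) := by
          rw [sq, Finset.sum_mul_sum, Finset.mul_sum, ← Finset.sum_add_distrib]
          refine Finset.sum_congr rfl fun i hi => ?_
          rw [Finset.mul_sum, ← Finset.sum_add_distrib]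
          exact Finset.sum_congr rfl fun j hj => by ring
        set G := fun i j : Fin n => x i * x j * ((D' - d i j) / 2) with hGdef
        have e2 : ∀ g : Fin n → ℝ, ∑ i ∈ s, g i = ∑ i ∈ s \ C, g i + ∑ i ∈ C, g i :=
          fun g => (Finset.sum_sdiff hCs).symm
        have c1 : ∑ i ∈ s \ C, ∑ j ∈ C, G i j = 0 :=
          Finset.sum_eq_zero fun i hi => Finset.sum_eq_zero fun j hj => by
            simp only [hGdef]; rw [h_symm, hcross j hj i hi]; ring
        have c2 : ∑ i ∈ C, ∑ j ∈ s \ C, G i j = 0 :=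
          Finset.sum_eq_zero fun i hi => Finset.sum_eq_zero fun j hj => by
            simp only [hGdef]; rw [hcross i hi j hj]; ring
        have main : ∑ i ∈ s, ∑ j ∈ s, G i j =
            (∑ i ∈ C, ∑ j ∈ C, G i j) + ∑ i ∈ s \ C, ∑ j ∈ s \ C, G i j := by
          calc ∑ i ∈ s, ∑ j ∈ s, G i j
              = ∑ i ∈ s \ C, ∑ j ∈ s, G i j + ∑ i ∈ C, ∑ j ∈ s, G i j := e2 _
            _ = (∑ i ∈ s \ C, (∑ j ∈ s \ C, G i j + ∑ j ∈ C, G i j)) +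
                ∑ i ∈ C, (∑ j ∈ s \ C, G i j + ∑ j ∈ C, G i j) :=
                congrArg₂ (· + ·) (Finset.sum_congr rfl fun i _ => e2 _)
                  (Finset.sum_congr rfl fun i _ => e2 _)
            _ = _ := by rw [Finset.sum_add_distrib, Finset.sum_add_distrib, c1, c2]; ring
        rw [e1, main]
        simp only [hGdef]
        ring
      refine ⟨(D - D') / 2 + t₁ * t₂ / (t₁ + t₂), ?_, ?_, ?_⟩
      · -- basic lower bound
        have hharm : D' / (2 * m) ≤ t₁ * t₂ / (t₁ + t₂) := by
          rw [← hab]; exact harm_mono _ _ _ _ hapos hbpos ht₁ge ht₂ge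
        have hmR1 : (1:ℝ) ≤ m := by exact_mod_cast hm1
        have hfirst : (D - D') / (2 * m) ≤ (D - D') / 2 := by
          rw [div_le_div_iff₀ (by positivity) (by norm_num)]
          nlinarith [mul_nonneg (sub_nonneg.2 hD'le) (sub_nonneg.2 hmR1)]
        calc D / (2 * m) = (D - D') / (2 * m) + D' / (2 * m) := by ring
          _ ≤ (D - D') / 2 + t₁ * t₂ / (t₁ + t₂) := add_le_add hfirst hharm
      · -- strict lower bound
        rintro ⟨p, hp, q, hq, hpq, hplt⟩
        rcases lt_or_eq_of_le hD'le with hlt | heq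
        · have hharm : D' / (2 * m) ≤ t₁ * t₂ / (t₁ + t₂) := by
            rw [← hab]; exact harm_mono _ _ _ _ hapos hbpos ht₁ge ht₂ge
          have hm2R : (1:ℝ) < m := by exact_mod_cast h2
          have hfirst : (D - D') / (2 * m) < (D - D') / 2 := by
            rw [div_lt_div_iff₀ (by positivity) (by norm_num)]
            nlinarith [mul_pos (sub_pos.2 hlt) (sub_pos.2 hm2R)]
          calc D / (2 * m) = (D - D') / (2 * m) + D' / (2 * m) := by ring
            _ < (D - D') / 2 + t₁ * t₂ / (t₁ + t₂) := add_lt_add_of_lt_of_le hfirst hharm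
        · -- D' = D, the strict pair lies within C or within s \ C
          have hpqD' : d p q < D' := heq ▸ hplt
          have hharm : D' / (2 * m) < t₁ * t₂ / (t₁ + t₂) := by
            rw [← hab]
            by_cases hpC : p ∈ C
            · by_cases hqC : q ∈ C
              · exact harm_mono_strict _ _ _ _ hapos hbpos ht₁ge ht₂ge
                  (Or.inl (ht₁st ⟨p, hpC, q, hqC, hpq, hpqD'⟩))
              · exact absurd (hcross p hpC q (Finset.mem_sdiff.2 ⟨hq, hqC⟩)) (ne_of_lt hpqD')
            · by_cases hqC : q ∈ C
              · have := hcross q hqC p (Finset.mem_sdiff.2 ⟨hp, hpC⟩)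
                rw [← h_symm] at this
                exact absurd this (ne_of_lt hpqD')
              · exact harm_mono_strict _ _ _ _ hapos hbpos ht₁ge ht₂ge
                  (Or.inr (ht₂st ⟨p, Finset.mem_sdiff.2 ⟨hp, hpC⟩, q,
                    Finset.mem_sdiff.2 ⟨hq, hqC⟩, hpq, hpqD'⟩))
          have hmR1 : (1:ℝ) ≤ m := by exact_mod_cast hm1
          have hfirst : (D - D') / (2 * m) ≤ (D - D') / 2 := by
            rw [div_le_div_iff₀ (by positivity) (by norm_num)]
            nlinarith [mul_nonneg (sub_nonneg.2 hD'le) (sub_nonneg.2 hmR1)]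
          calc D / (2 * m) = (D - D') / (2 * m) + D' / (2 * m) := by ring
            _ < (D - D') / 2 + t₁ * t₂ / (t₁ + t₂) := add_lt_add_of_le_of_lt hfirst hharm
      · -- the quadratic bound
        intro x
        rw [hsplit x]
        have hsum : ∑ i ∈ s, x i = ∑ i ∈ s \ C, x i + ∑ i ∈ C, x i := (Finset.sum_sdiff hCs).symm
        have h4 := harm_quad t₂ t₁ (∑ i ∈ s \ C, x i) (∑ i ∈ C, x i) t₂pos t₁pos
        have hcomm : t₂ * t₁ / (t₂ + t₁) = t₁ * t₂ / (t₁ + t₂) := by rw [mul_comm, add_comm]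
        rw [hcomm] at h4
        have qC := ht₁Q x
        have q₂ := ht₂Q x
        have expand : ((D - D') / 2 + t₁ * t₂ / (t₁ + t₂)) * (∑ i ∈ s, x i) ^ 2 =
            (D - D') / 2 * (∑ i ∈ s, x i) ^ 2 +
            t₁ * t₂ / (t₁ + t₂) * (∑ i ∈ s \ C, x i + ∑ i ∈ C, x i) ^ 2 := by
          rw [← hsum]; ring
        rw [expand]
        linarith

/-- **Theorem (equality case).** Let `d` be an ultrametric on `n ≥ 1` points with
`d i j ≤ 2` for all `i, j` and `d i j > 0` for `i ≠ j` (a leaf-positive ultrametric of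
radius at most 1).  Let `c_d` be the infimum of all `c ≥ 0` for which the matrix with
entries `c - d i j / 2` is positive semidefinite.  Then `c_d = 1 - 1/n` if and only if
`d i j = 2` for all `i ≠ j` (the star metric). -/
theorem equality_case_ultrametric (n : ℕ) (hn : 1 ≤ n) (d : Fin n → Fin n → ℝ)
    (h_diag : ∀ i, d i i = 0)
    (h_symm : ∀ i j, d i j = d j i)
    (h_nonneg : ∀ i j, 0 ≤ d i j)
    (h_ultra : ∀ i j k, d i j ≤ max (d i k) (d k j))
    (h_bound : ∀ i j, d i j ≤ 2)
    (h_pos : ∀ i j, i ≠ j → 0 < d i j) :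
    sInf {c : ℝ | 0 ≤ c ∧
        (Matrix.of fun i j : Fin n => c - d i j / 2).PosSemidef} = 1 - 1 / (n : ℝ) ↔
      ∀ i j, i ≠ j → d i j = 2 := by
  have hnR : (0:ℝ) < n := by exact_mod_cast hn
  -- quadratic-form characterization of positive semidefiniteness
  have hform : ∀ (c : ℝ) (x : Fin n → ℝ),
      dotProduct (star x) (Matrix.mulVec (Matrix.of fun i j : Fin n => c - d i j / 2) x) =
      ∑ i, ∑ j, x i * x j * (c - d i j / 2) := by
    intro c x
    simp only [dotProduct, Matrix.mulVec, Pi.star_apply, star_trivial, Matrix.of_apply]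
    refine Finset.sum_congr rfl fun i _ => ?_
    rw [Finset.mul_sum]
    exact Finset.sum_congr rfl fun j _ => by ring
  have hherm : ∀ c : ℝ, (Matrix.of fun i j : Fin n => c - d i j / 2).IsHermitian := by
    intro c
    ext i j
    simp only [Matrix.conjTranspose_apply, Matrix.of_apply, star_trivial]
    rw [h_symm]
  have hquad : ∀ c : ℝ, (Matrix.of fun i j : Fin n => c - d i j / 2).PosSemidef ↔
      ∀ x : Fin n → ℝ, 0 ≤ ∑ i, ∑ j, x i * x j * (c - d i j / 2) := by
    intro c
    constructor
    · intro h x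
      have := h.dotProduct_mulVec_nonneg x
      rwa [hform] at this
    · intro h
      exact Matrix.PosSemidef.of_dotProduct_mulVec_nonneg (hherm c) fun x => by rw [hform]; exact h x
  have hbdd : BddBelow {c : ℝ | 0 ≤ c ∧
      (Matrix.of fun i j : Fin n => c - d i j / 2).PosSemidef} :=
    ⟨0, fun c hc => hc.1⟩
  constructor
  · -- sInf = 1 - 1/n implies star metric
    intro hinf
    by_contra hstar
    push_neg at hstar
    obtain ⟨p, q, hpq, hne2⟩ := hstar
    have hlt : d p q < 2 := lt_of_le_of_ne (h_bound p q) hne2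
    have hn2 : 1 < n := by
      by_contra h
      push_neg at h
      have hn1 : n = 1 := le_antisymm h hn
      subst hn1
      exact hpq (Subsingleton.elim p q)
    have hn2R : (1:ℝ) < n := by exact_mod_cast hn2
    haveI : Nonempty (Fin n) := ⟨⟨0, hn⟩⟩
    obtain ⟨t, htge, htst, htQ⟩ := key_lemma n d h_diag h_symm h_ultra h_pos n Finset.univ
      (by simp) Finset.univ_nonempty 2 (by norm_num) (fun i _ j _ => h_bound i j)
    have ht : 2 / (2 * (n:ℝ)) < t :=
      htst ⟨p, Finset.mem_univ p, q, Finset.mem_univ q, hpq, hlt⟩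
    have htn : 1 / (n:ℝ) < t := by
      rwa [show (2:ℝ) / (2 * n) = 1 / n by rw [div_eq_div_iff (mul_pos two_pos hnR).ne' hnR.ne']; ring] at ht
    set c₀ : ℝ := max (1 - t) 0 with hc₀def
    have hc₀mem : c₀ ∈ {c : ℝ | 0 ≤ c ∧
        (Matrix.of fun i j : Fin n => c - d i j / 2).PosSemidef} := by
      refine ⟨le_max_right _ _, (hquad c₀).2 fun x => ?_⟩
      have hQ := htQ x
      have h1c : 1 - c₀ ≤ t := by
        have := le_max_left (1 - t) 0
        simp only [hc₀def]
        linarith [le_max_left (1 - t) 0]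
      have e : ∑ i, ∑ j, x i * x j * (c₀ - d i j / 2) =
          (∑ i, ∑ j, x i * x j * ((2 - d i j) / 2)) - (1 - c₀) * (∑ i, x i) ^ 2 := by
        rw [sq, Finset.sum_mul_sum, Finset.mul_sum, ← Finset.sum_sub_distrib]
        refine Finset.sum_congr rfl fun i _ => ?_
        rw [Finset.mul_sum, ← Finset.sum_sub_distrib]
        exact Finset.sum_congr rfl fun j _ => by ring
      rw [e]
      have h2 : (1 - c₀) * (∑ i, x i) ^ 2 ≤ t * (∑ i, x i) ^ 2 :=
        mul_le_mul_of_nonneg_right h1c (sq_nonneg _)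
      linarith
    have hle := csInf_le hbdd hc₀mem
    have hc₀lt : c₀ < 1 - 1 / (n:ℝ) := by
      have h1n : 1 / (n:ℝ) < 1 := by rw [div_lt_one hnR]; exact hn2R
      have h0 : (0:ℝ) < 1 - 1 / n := by linarith
      have h1 : 1 - t < 1 - 1 / (n:ℝ) := by linarith
      exact max_lt h1 h0
    linarith [hinf ▸ hle]
  · -- star metric implies sInf = 1 - 1/n
    intro hstar
    have hd : ∀ (c : ℝ) (i j : Fin n), c - d i j / 2 = (c - 1) + (if j = i then 1 else 0) := by
      intro c i j
      by_cases h : j = i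
      · subst h; rw [h_diag]; simp
      · rw [hstar i j (fun hh => h hh.symm)]; simp [h]
    have hQid : ∀ (c : ℝ) (x : Fin n → ℝ), ∑ i, ∑ j, x i * x j * (c - d i j / 2) =
        (c - 1) * (∑ i, x i) ^ 2 + ∑ i, (x i) ^ 2 := by
      intro c x
      have e1 : ∀ i : Fin n, ∑ j, x i * x j * (c - d i j / 2) =
          (c - 1) * (x i * ∑ j, x j) + (x i) ^ 2 := by
        intro i
        simp_rw [hd c, mul_add, Finset.sum_add_distrib, mul_ite, mul_one, mul_zero]
        rw [Finset.sum_ite_eq' Finset.univ i (fun j => x i * x j)]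
        simp only [Finset.mem_univ, if_true]
        rw [Finset.mul_sum, ← Finset.sum_mul, Finset.mul_sum]
        congr 1
        · rw [Finset.sum_mul]
          exact Finset.sum_congr rfl fun j _ => by ring
        · ring
      rw [Finset.sum_congr rfl fun i _ => e1 i, Finset.sum_add_distrib]
      congr 1
      rw [← Finset.mul_sum, ← Finset.sum_mul, ← sq]
    have hset : {c : ℝ | 0 ≤ c ∧
        (Matrix.of fun i j : Fin n => c - d i j / 2).PosSemidef} = Set.Ici (1 - 1/(n:ℝ)) := by
      ext c
      simp only [Set.mem_setOf_eq, Set.mem_Ici]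
      constructor
      · rintro ⟨hc0, hpsd⟩
        have h1 := ((hquad c).1 hpsd) (fun _ => 1)
        rw [hQid] at h1
        simp only [one_pow, Finset.sum_const, Finset.card_univ, Fintype.card_fin,
          nsmul_eq_mul, mul_one] at h1
        have h1n : (1/(n:ℝ)) * n = 1 := by field_simp
        nlinarith [sq_nonneg ((n:ℝ) - 1), mul_pos hnR hnR]
      · intro hc
        have hc0 : 0 ≤ c := by
          have : 1 / (n:ℝ) ≤ 1 := by rw [div_le_one hnR]; exact_mod_cast hn
          linarith
        refine ⟨hc0, (hquad c).2 fun x => ?_⟩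
        rw [hQid]
        have hCS : (∑ i, x i) ^ 2 ≤ (n:ℝ) * ∑ i, (x i) ^ 2 := by
          have := sq_sum_le_card_mul_sum_sq (s := Finset.univ) (f := x)
          simpa [Finset.card_univ] using this
        have h1 : (1 - c) * (∑ i, x i) ^ 2 ≤ (1/(n:ℝ)) * (∑ i, x i) ^ 2 :=
          mul_le_mul_of_nonneg_right (by linarith) (sq_nonneg _)
        have h2 : (1/(n:ℝ)) * (∑ i, x i) ^ 2 ≤ (1/(n:ℝ)) * ((n:ℝ) * ∑ i, (x i) ^ 2) :=
          mul_le_mul_of_nonneg_left hCS (by positivity)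
        have h3 : (1/(n:ℝ)) * ((n:ℝ) * ∑ i, (x i) ^ 2) = ∑ i, (x i) ^ 2 := by
          field_simp
        linarith
    rw [hset, csInf_Ici]
end

section
/- Let E be a finite set and let ν : Finset E → ℝ ∪ {−∞} be M♮-concave with ν(S) ≠ −∞ whenever |S| ≤ 2. Fix a real number q with 0 < q ≤ 1 and define d : E → E → ℝ by d(i,i) = 0 and, for i ≠ j, d(i,j) = 2·q^(−ν({i,j}) + ν({i}) + ν({j}) − ν(∅)) (all exponents being real numbers by hypothesis). Then d is an ultrametric of radius at most 1: d is symmetric, nonnegative, satisfies d(i,j) ≤ max(d(i,k), d(k,j)) for all i, j, k ∈ E, and d(i,j) ≤ 2 for all i, j. -/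
/-- A function `ν : Finset E → ℝ ∪ {−∞}` is M♮-concave if it satisfies the exchange
property: for all `I₁, I₂` and `i₁ ∈ I₁ \ I₂`, either
`ν I₁ + ν I₂ ≤ ν (I₁ \ {i₁}) + ν (I₂ ∪ {i₁})`, or there is `i₂ ∈ I₂ \ I₁` with
`ν I₁ + ν I₂ ≤ ν ((I₁ \ {i₁}) ∪ {i₂}) + ν ((I₂ \ {i₂}) ∪ {i₁})`. -/
def MNatConcave {E : Type*} [DecidableEq E] (ν : Finset E → WithBot ℝ) : Prop :=
  ∀ I₁ I₂ : Finset E, ∀ i₁ ∈ I₁ \ I₂,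
    (ν I₁ + ν I₂ ≤ ν (I₁.erase i₁) + ν (insert i₁ I₂)) ∨
    (∃ i₂ ∈ I₂ \ I₁,
      ν I₁ + ν I₂ ≤ ν (insert i₂ (I₁.erase i₁)) + ν (insert i₁ (I₂.erase i₂)))

/-- **Lemma (ultrametric from an M♮-concave function).** If `ν` is M♮-concave with
`ν S ≠ −∞` for all `S` with `|S| ≤ 2`, and `0 < q ≤ 1`, then
`d i j = 2 q^{-ν{i,j} + ν{i} + ν{j} - ν ∅}` (and `d i i = 0`) is a symmetric nonnegative
ultrametric on `E` with all values at most `2` (radius at most 1). -/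
theorem mNatConcave_ultrametric {E : Type*} [Fintype E] [DecidableEq E]
    (ν : Finset E → WithBot ℝ) (hν : MNatConcave ν)
    (hdom : ∀ S : Finset E, S.card ≤ 2 → ν S ≠ ⊥)
    (q : ℝ) (hq0 : 0 < q) (hq1 : q ≤ 1)
    (d : E → E → ℝ)
    (hd_diag : ∀ i, d i i = 0)
    (hd_off : ∀ i j, i ≠ j → d i j =
      2 * q ^ (-WithBot.unbotD 0 (ν {i, j}) + WithBot.unbotD 0 (ν {i}) + WithBot.unbotD 0 (ν {j})
        - WithBot.unbotD 0 (ν ∅))) :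
    (∀ i j, d i j = d j i) ∧
    (∀ i j, 0 ≤ d i j) ∧
    (∀ i j k, d i j ≤ max (d i k) (d k j)) ∧
    (∀ i j, d i j ≤ 2) := by
  set a : Finset E → ℝ := fun S => WithBot.unbotD 0 (ν S) with ha
  have hcoe : ∀ S : Finset E, S.card ≤ 2 → ν S = (a S : WithBot ℝ) := by
    intro S hS
    obtain ⟨x, hx⟩ := WithBot.ne_bot_iff_exists.mp (hdom S hS)
    simp [ha, ← hx]
  have hcard2 : ∀ i j : E, ({i, j} : Finset E).card ≤ 2 := by
    intro i j
    exact (Finset.card_insert_le _ _).trans (by simp)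
  have hcard1 : ∀ i : E, ({i} : Finset E).card ≤ 2 := by simp
  have hcard0 : (∅ : Finset E).card ≤ 2 := by simp
  -- submodularity on pairs
  have hsub : ∀ i j : E, i ≠ j → a {i, j} + a ∅ ≤ a {i} + a {j} := by
    intro i j hij
    have h := hν {i, j} ∅ i (by simp)
    have herase : ({i, j} : Finset E).erase i = {j} :=
      Finset.erase_insert (by simp [hij])
    rcases h with h | h
    · rw [herase, hcoe {i, j} (hcard2 i j), hcoe ∅ hcard0, hcoe {j} (hcard1 j)] at h
      rw [show insert i (∅ : Finset E) = {i} from rfl, hcoe {i} (hcard1 i)] at h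
      have h' : a {i, j} + a ∅ ≤ a {j} + a {i} := by exact_mod_cast h
      linarith
    · obtain ⟨i₂, hi₂, -⟩ := h
      simp at hi₂
  -- exponent nonneg
  have hexp : ∀ i j : E, i ≠ j → 0 ≤ -a {i, j} + a {i} + a {j} - a ∅ := by
    intro i j hij
    have := hsub i j hij
    linarith
  -- key exchange inequality
  have hkey : ∀ i j k : E, i ≠ j → k ≠ i → k ≠ j →
      a {i, j} + a {k} ≤ a {j} + a {i, k} ∨ a {i, j} + a {k} ≤ a {k, j} + a {i} := by
    intro i j k hij hki hkj
    have h := hν {i, j} {k} i (by simp [Ne.symm hki])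
    have herase : ({i, j} : Finset E).erase i = {j} :=
      Finset.erase_insert (by simp [hij])
    rcases h with h | h
    · left
      rw [herase, hcoe {i, j} (hcard2 i j), hcoe {k} (hcard1 k), hcoe {j} (hcard1 j),
        hcoe {i, k} (hcard2 i k)] at h
      exact_mod_cast h
    · right
      obtain ⟨i₂, hi₂, h⟩ := h
      have : i₂ = k := by simpa using (Finset.mem_sdiff.mp hi₂).1
      rw [this] at h
      rw [herase, Finset.erase_singleton] at h
      rw [show insert i (∅ : Finset E) = {i} from rfl] at h
      rw [hcoe {i, j} (hcard2 i j), hcoe {k} (hcard1 k), hcoe ({k, j} : Finset E) (hcard2 k j),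
        hcoe {i} (hcard1 i)] at h
      exact_mod_cast h
  have hnn : ∀ i j, 0 ≤ d i j := by
    intro i j
    rcases eq_or_ne i j with rfl | hij
    · rw [hd_diag]
    · rw [hd_off i j hij]
      positivity
  have hle2 : ∀ i j, d i j ≤ 2 := by
    intro i j
    rcases eq_or_ne i j with rfl | hij
    · rw [hd_diag]; norm_num
    · rw [hd_off i j hij]
      have : q ^ (-WithBot.unbotD 0 (ν {i, j}) + WithBot.unbotD 0 (ν {i}) + WithBot.unbotD 0 (ν {j})
          - WithBot.unbotD 0 (ν ∅)) ≤ 1 :=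
        Real.rpow_le_one hq0.le hq1 (hexp i j hij)
      linarith
  refine ⟨?_, hnn, ?_, hle2⟩
  · intro i j
    rcases eq_or_ne i j with rfl | hij
    · rfl
    · rw [hd_off i j hij, hd_off j i (Ne.symm hij), Finset.pair_comm]
      ring_nf
  · intro i j k
    rcases eq_or_ne i j with rfl | hij
    · exact (hd_diag i ▸ le_max_iff.mpr (Or.inl (hnn i k)) : d i i ≤ _)
    rcases eq_or_ne k i with rfl | hki
    · rw [hd_diag]
      exact le_max_of_le_right le_rfl
    rcases eq_or_ne k j with rfl | hkj
    · exact le_max_of_le_left le_rfl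
    rw [hd_off i j hij, hd_off i k (fun h => hki h.symm), hd_off k j hkj]
    rcases hkey i j k hij hki hkj with h | h
    · refine le_max_of_le_left ?_
      have hmono : (-WithBot.unbotD 0 (ν {i, j}) + WithBot.unbotD 0 (ν {i}) + WithBot.unbotD 0 (ν {j})
          - WithBot.unbotD 0 (ν ∅)) ≥ (-WithBot.unbotD 0 (ν {i, k}) + WithBot.unbotD 0 (ν {i}) + WithBot.unbotD 0 (ν {k})
          - WithBot.unbotD 0 (ν ∅)) := by
        simp only [ha] at h ⊢
        linarith
      have := Real.rpow_le_rpow_of_exponent_ge hq0 hq1 hmono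
      linarith
    · refine le_max_of_le_right ?_
      have hmono : (-WithBot.unbotD 0 (ν {i, j}) + WithBot.unbotD 0 (ν {i}) + WithBot.unbotD 0 (ν {j})
          - WithBot.unbotD 0 (ν ∅)) ≥ (-WithBot.unbotD 0 (ν {k, j}) + WithBot.unbotD 0 (ν {k}) + WithBot.unbotD 0 (ν {j})
          - WithBot.unbotD 0 (ν ∅)) := by
        simp only [ha] at h ⊢
        linarith
      have := Real.rpow_le_rpow_of_exponent_ge hq0 hq1 hmono
      linarith
end

section
/- Let E be a finite set with |E| = n ≥ 1, let ν : Finset E → ℝ be a real-valued M♮-concave function (so its effective domain is all of 2^E), and let 0 < q ≤ 1. Then the n × n symmetric matrix C indexed by E with entries C i j = −(1 − 1/n) + q^(−ν({i,j}) + ν({i}) + ν({j}) − ν(∅)) for i ≠ j and C i i = −(1 − 1/n) is negative semidefinite. -/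
/-- M♮-concavity for a real-valued function `ν : Finset E → ℝ`
(effective domain all of `2^E`). -/
def MNatConcaveReal {E : Type*} [DecidableEq E] (ν : Finset E → ℝ) : Prop :=
  ∀ I₁ I₂ : Finset E, ∀ i₁ ∈ I₁ \ I₂,
    (ν I₁ + ν I₂ ≤ ν (I₁.erase i₁) + ν (insert i₁ I₂)) ∨
    (∃ i₂ ∈ I₂ \ I₁,
      ν I₁ + ν I₂ ≤ ν (insert i₂ (I₁.erase i₁)) + ν (insert i₁ (I₂.erase i₂)))

set_option maxHeartbeats 1000000

private lemma cauchy_two (u v S₁ S₂ : ℝ) (hu : 0 < u) (hv : 0 < v) :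
    (S₁ + S₂) ^ 2 / (u + v) ≤ S₁ ^ 2 / u + S₂ ^ 2 / v := by
  rw [div_add_div _ _ (ne_of_gt hu) (ne_of_gt hv),
    div_le_div_iff₀ (by positivity) (by positivity)]
  nlinarith [sq_nonneg (S₁ * v - S₂ * u), mul_pos hu hv]

private lemma key_ineq {E : Type*} [DecidableEq E] (a : E → E → ℝ)
    (hsym : ∀ i j, a i j = a j i)
    (htri : ∀ i j k : E, i ≠ j → i ≠ k → j ≠ k → min (a i k) (a j k) ≤ a i j)
    (q : ℝ) (hq0 : 0 < q) (hq1 : q ≤ 1) (x : E → ℝ) :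
    ∀ B : Finset E, ∀ t : ℝ, (∀ i ∈ B, ∀ j ∈ B, i ≠ j → t ≤ a i j) →
      ∑ i ∈ B, ∑ j ∈ B, (if i = j then (1 : ℝ) else q ^ (a i j)) * x i * x j ≤
        ∑ i ∈ B, (x i) ^ 2 + q ^ t * (1 - 1 / (B.card : ℝ)) * (∑ i ∈ B, x i) ^ 2 := by
  intro B
  induction B using Finset.strongInduction with
  | _ B ih =>
    intro t ht
    by_cases hcard : B.card ≤ 1
    · rcases Nat.le_one_iff_eq_zero_or_eq_one.mp hcard with h0 | h1
      · rw [Finset.card_eq_zero] at h0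
        subst h0; simp
      · obtain ⟨i, rfl⟩ := Finset.card_eq_one.mp h1
        simp [sq]
    · push_neg at hcard
      obtain ⟨i₀, hi₀B, j₀, hj₀B, hij₀⟩ := Finset.one_lt_card.mp hcard
      have hne : B.offDiag.Nonempty := ⟨(i₀, j₀), Finset.mem_offDiag.mpr ⟨hi₀B, hj₀B, hij₀⟩⟩
      obtain ⟨⟨i₀, j₀⟩, hp, hmin⟩ := B.offDiag.exists_min_image (fun p => a p.1 p.2) hne
      obtain ⟨hi₀B, hj₀B, hij₀⟩ := Finset.mem_offDiag.mp hp
      clear hp hne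
      set ts := a i₀ j₀ with hts
      have hminB : ∀ i ∈ B, ∀ j ∈ B, i ≠ j → ts ≤ a i j := fun i hi j hj hij =>
        hmin (i, j) (Finset.mem_offDiag.mpr ⟨hi, hj, hij⟩)
      set C := B.filter (fun j => j = i₀ ∨ ts < a i₀ j) with hCdef
      set D := B \ C with hDdef
      have hCB : C ⊆ B := Finset.filter_subset _ _
      have hi₀C : i₀ ∈ C := Finset.mem_filter.mpr ⟨hi₀B, Or.inl rfl⟩
      have hj₀C : j₀ ∉ C := by
        intro h
        rcases (Finset.mem_filter.mp h).2 with h' | h'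
        · exact hij₀ h'.symm
        · exact lt_irrefl _ h'
      have hj₀D : j₀ ∈ D := Finset.mem_sdiff.mpr ⟨hj₀B, hj₀C⟩
      have hi₀D : i₀ ∉ D := fun h => (Finset.mem_sdiff.mp h).2 hi₀C
      have hCss : C ⊂ B := ⟨hCB, fun h => hj₀C (h hj₀B)⟩
      have hDss : D ⊂ B := ⟨Finset.sdiff_subset, fun h => hi₀D (h hi₀B)⟩
      -- cross values are exactly ts
      have hcross : ∀ i ∈ C, ∀ j ∈ D, i ≠ j ∧ a i j = ts := by
        intro i hiC j hjD
        obtain ⟨hjB, hjC⟩ := Finset.mem_sdiff.mp hjD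
        obtain ⟨hiB, hpred⟩ := Finset.mem_filter.mp hiC
        have hij : i ≠ j := fun h => hjC (h ▸ hiC)
        refine ⟨hij, le_antisymm ?_ (hminB i hiB j hjB hij)⟩
        by_contra h'
        push_neg at h'
        apply hjC
        refine Finset.mem_filter.mpr ⟨hjB, Or.inr ?_⟩
        rcases eq_or_ne i i₀ with rfl | hii₀
        · exact h'
        · have hji₀ : j ≠ i₀ := fun h => hjC (h ▸ hi₀C)
          have hlt : ts < a i₀ i := hpred.resolve_left hii₀
          have := htri i₀ j i hji₀.symm (Ne.symm hii₀) hij.symm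
          have hmin' : ts < min (a i₀ i) (a j i) := lt_min hlt (by rwa [← hsym i j])
          exact lt_of_lt_of_le hmin' this
      have hCbd : ∀ i ∈ C, ∀ j ∈ C, i ≠ j → ts ≤ a i j :=
        fun i hi j hj hij => hminB i (hCB hi) j (hCB hj) hij
      have hDbd : ∀ i ∈ D, ∀ j ∈ D, i ≠ j → ts ≤ a i j :=
        fun i hi j hj hij => hminB i (hDss.1 hi) j (hDss.1 hj) hij
      have ihC := ih C hCss ts hCbd
      have ihD := ih D hDss ts hDbd
      -- notation
      set m : E → E → ℝ := fun i j => (if i = j then (1 : ℝ) else q ^ (a i j)) * x i * x j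
        with hm
      have hsplit : ∀ g : E → ℝ, ∑ i ∈ B, g i = ∑ i ∈ C, g i + ∑ i ∈ D, g i := by
        intro g
        rw [hDdef, ← Finset.sum_sdiff hCB]
        ring
      -- cross sums
      have hcs1 : ∑ i ∈ C, ∑ j ∈ D, m i j = q ^ ts * ((∑ i ∈ C, x i) * (∑ j ∈ D, x j)) := by
        have e1 : ∑ i ∈ C, ∑ j ∈ D, m i j = ∑ i ∈ C, ∑ j ∈ D, q ^ ts * (x i * x j) := by
          refine Finset.sum_congr rfl fun i hi => Finset.sum_congr rfl fun j hj => ?_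
          obtain ⟨hij, haij⟩ := hcross i hi j hj
          rw [hm]; simp only [if_neg hij, haij]; ring
        rw [e1, Finset.sum_mul_sum, Finset.mul_sum]
        exact Finset.sum_congr rfl fun i _ => (Finset.mul_sum _ _ _).symm
      have hcs2 : ∑ i ∈ D, ∑ j ∈ C, m i j = q ^ ts * ((∑ i ∈ C, x i) * (∑ j ∈ D, x j)) := by
        have e1 : ∑ i ∈ D, ∑ j ∈ C, m i j = ∑ i ∈ D, ∑ j ∈ C, q ^ ts * (x i * x j) := by
          refine Finset.sum_congr rfl fun i hi => Finset.sum_congr rfl fun j hj => ?_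
          obtain ⟨hij, haij⟩ := hcross j hj i hi
          rw [hm]; simp only [if_neg (Ne.symm hij), hsym i j, haij]; ring
        rw [e1]
        rw [show ((∑ i ∈ C, x i) * (∑ j ∈ D, x j)) = ((∑ i ∈ D, x i) * (∑ j ∈ C, x j)) by ring,
          Finset.sum_mul_sum, Finset.mul_sum]
        exact Finset.sum_congr rfl fun i _ => (Finset.mul_sum _ _ _).symm
      have hQsplit : ∑ i ∈ B, ∑ j ∈ B, m i j =
          ∑ i ∈ C, ∑ j ∈ C, m i j + ∑ i ∈ D, ∑ j ∈ D, m i j +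
            2 * (q ^ ts * ((∑ i ∈ C, x i) * (∑ j ∈ D, x j))) := by
        rw [hsplit (fun i => ∑ j ∈ B, m i j)]
        have e1 : ∑ i ∈ C, ∑ j ∈ B, m i j
            = ∑ i ∈ C, ∑ j ∈ C, m i j + ∑ i ∈ C, ∑ j ∈ D, m i j := by
          rw [← Finset.sum_add_distrib]
          exact Finset.sum_congr rfl fun i _ => hsplit _
        have e2 : ∑ i ∈ D, ∑ j ∈ B, m i j
            = ∑ i ∈ D, ∑ j ∈ C, m i j + ∑ i ∈ D, ∑ j ∈ D, m i j := by
          rw [← Finset.sum_add_distrib]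
          exact Finset.sum_congr rfl fun i _ => hsplit _
        rw [e1, e2, hcs1, hcs2]; ring
      -- numbers
      set S₁ := ∑ i ∈ C, x i
      set S₂ := ∑ i ∈ D, x i
      have hn₁ : (0 : ℝ) < (C.card : ℝ) := by
        exact_mod_cast Finset.card_pos.mpr ⟨i₀, hi₀C⟩
      have hn₂ : (0 : ℝ) < (D.card : ℝ) := by
        exact_mod_cast Finset.card_pos.mpr ⟨j₀, hj₀D⟩
      have hbcard : (B.card : ℝ) = (C.card : ℝ) + (D.card : ℝ) := by
        have : C.card + D.card = B.card := by
          rw [hDdef, Finset.card_sdiff_of_subset hCB]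
          have := Finset.card_le_card hCB
          omega
        exact_mod_cast this.symm
      have hP : (0 : ℝ) < q ^ ts := Real.rpow_pos_of_pos hq0 _
      have hPt : q ^ ts ≤ q ^ t :=
        Real.rpow_le_rpow_of_exponent_ge hq0 hq1 (ht i₀ hi₀B j₀ hj₀B hij₀)
      -- the two-block inequality
      have hblock : q ^ ts * (1 - 1 / (C.card : ℝ)) * S₁ ^ 2
            + q ^ ts * (1 - 1 / (D.card : ℝ)) * S₂ ^ 2
            + 2 * (q ^ ts * (S₁ * S₂))
          ≤ q ^ ts * (1 - 1 / (B.card : ℝ)) * (S₁ + S₂) ^ 2 := by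
        have hcs := cauchy_two (C.card : ℝ) (D.card : ℝ) S₁ S₂ hn₁ hn₂
        have e : (1 - 1 / (C.card : ℝ)) * S₁ ^ 2 + (1 - 1 / (D.card : ℝ)) * S₂ ^ 2
              + 2 * (S₁ * S₂)
            ≤ (1 - 1 / (B.card : ℝ)) * (S₁ + S₂) ^ 2 := by
          rw [hbcard]
          have e1 : (1 - 1 / (C.card : ℝ)) * S₁ ^ 2 = S₁ ^ 2 - S₁ ^ 2 / (C.card : ℝ) := by ring
          have e2 : (1 - 1 / (D.card : ℝ)) * S₂ ^ 2 = S₂ ^ 2 - S₂ ^ 2 / (D.card : ℝ) := by ring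
          have e3 : (1 - 1 / ((C.card : ℝ) + (D.card : ℝ))) * (S₁ + S₂) ^ 2
              = (S₁ + S₂) ^ 2 - (S₁ + S₂) ^ 2 / ((C.card : ℝ) + (D.card : ℝ)) := by ring
          rw [e1, e2, e3]
          nlinarith [hcs]
        nlinarith [e, hP]
      have hSx : ∑ i ∈ B, x i = S₁ + S₂ := hsplit x
      have hSx2 : ∑ i ∈ B, (x i) ^ 2 = ∑ i ∈ C, (x i) ^ 2 + ∑ i ∈ D, (x i) ^ 2 :=
        hsplit _
      have hfin : q ^ ts * (1 - 1 / (B.card : ℝ)) * (S₁ + S₂) ^ 2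
          ≤ q ^ t * (1 - 1 / (B.card : ℝ)) * (S₁ + S₂) ^ 2 := by
        have hb1 : (1 : ℝ) ≤ (B.card : ℝ) := by
          have : 1 ≤ B.card := by omega
          exact_mod_cast this
        have h1 : (0 : ℝ) ≤ 1 - 1 / (B.card : ℝ) := by
          have : 1 / (B.card : ℝ) ≤ 1 := by
            rw [div_le_one (by linarith)]; exact hb1
          linarith
        linarith [mul_le_mul_of_nonneg_right hPt (mul_nonneg h1 (sq_nonneg (S₁ + S₂)))]
      calc ∑ i ∈ B, ∑ j ∈ B, m i j
          = ∑ i ∈ C, ∑ j ∈ C, m i j + ∑ i ∈ D, ∑ j ∈ D, m i j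
            + 2 * (q ^ ts * (S₁ * S₂)) := hQsplit
        _ ≤ (∑ i ∈ C, (x i) ^ 2 + q ^ ts * (1 - 1 / (C.card : ℝ)) * S₁ ^ 2)
            + (∑ i ∈ D, (x i) ^ 2 + q ^ ts * (1 - 1 / (D.card : ℝ)) * S₂ ^ 2)
            + 2 * (q ^ ts * (S₁ * S₂)) := by
            exact add_le_add (add_le_add ihC ihD) le_rfl
        _ ≤ ∑ i ∈ B, (x i) ^ 2 + q ^ t * (1 - 1 / (B.card : ℝ)) * (∑ i ∈ B, x i) ^ 2 := by
            rw [hSx, hSx2]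
            have := hblock
            linarith [hfin]

/-- **Theorem (key negative-semidefiniteness step).** Let `ν : Finset E → ℝ` be
M♮-concave on a finite set `E` with `n = |E| ≥ 1` elements, and let `0 < q ≤ 1`.
Then the symmetric matrix `C` with entries
`C i j = −(1 − 1/n) + q^{−ν{i,j} + ν{i} + ν{j} − ν ∅}` for `i ≠ j` and
`C i i = −(1 − 1/n)` is negative semidefinite, i.e. `−C` is positive semidefinite. -/
theorem mNatConcave_matrix_negSemidef {E : Type*} [Fintype E] [DecidableEq E]
    (hE : 1 ≤ Fintype.card E)
    (ν : Finset E → ℝ) (hν : MNatConcaveReal ν)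
    (q : ℝ) (hq0 : 0 < q) (hq1 : q ≤ 1) :
    (-(Matrix.of fun i j : E =>
      if i = j then -(1 - 1 / (Fintype.card E : ℝ))
      else -(1 - 1 / (Fintype.card E : ℝ)) +
        q ^ (-ν {i, j} + ν {i} + ν {j} - ν ∅))).PosSemidef := by
  have herase : ∀ i j : E, i ≠ j → ({i, j} : Finset E).erase i = {j} := by
    intro i j hij
    rw [show ({i, j} : Finset E) = insert i {j} from rfl,
      Finset.erase_insert (by simp [hij])]
  have hsyma : ∀ i j : E,
      (-ν {i, j} + ν {i} + ν {j} - ν ∅) = (-ν {j, i} + ν {j} + ν {i} - ν ∅) := by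
    intro i j; rw [Finset.pair_comm]; ring
  have ha0 : ∀ i j : E, i ≠ j → 0 ≤ -ν {i, j} + ν {i} + ν {j} - ν ∅ := by
    intro i j hij
    rcases hν {i, j} ∅ i (by simp) with h | ⟨i₂, hi₂, _⟩
    · rw [herase i j hij] at h
      have : insert i (∅ : Finset E) = {i} := rfl
      rw [this] at h
      linarith
    · simp at hi₂
  have htri : ∀ i j k : E, i ≠ j → i ≠ k → j ≠ k →
      min (-ν ({i, k} : Finset E) + ν {i} + ν {k} - ν ∅)
        (-ν ({j, k} : Finset E) + ν {j} + ν {k} - ν ∅)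
        ≤ -ν {i, j} + ν {i} + ν {j} - ν ∅ := by
    intro i j k hij hik hjk
    rcases hν {i, j} {k} i (by simp [hik]) with h | ⟨i₂, hi₂, h⟩
    · rw [herase i j hij] at h
      have : insert i ({k} : Finset E) = {i, k} := rfl
      rw [this] at h
      exact le_trans (min_le_left _ _) (by linarith)
    · have hik2 : i₂ = k := by
        simp only [Finset.mem_sdiff, Finset.mem_singleton] at hi₂
        exact hi₂.1
      subst hik2
      rw [herase i j hij, Finset.erase_singleton] at h
      have h1 : insert i₂ ({j} : Finset E) = {j, i₂} := Finset.pair_comm i₂ j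
      have h2 : insert i (∅ : Finset E) = {i} := rfl
      rw [h1, h2] at h
      exact le_trans (min_le_right _ _) (by linarith)
  rw [Matrix.posSemidef_iff_dotProduct_mulVec]
  constructor
  · -- Hermitian
    have : (Matrix.of fun i j : E =>
        if i = j then -(1 - 1 / (Fintype.card E : ℝ))
        else -(1 - 1 / (Fintype.card E : ℝ)) +
          q ^ (-ν {i, j} + ν {i} + ν {j} - ν ∅)).IsHermitian := by
      apply Matrix.IsHermitian.ext
      intro i j
      simp only [Matrix.of_apply, star_trivial]
      rcases eq_or_ne i j with rfl | hij
      · rfl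
      · rw [if_neg (Ne.symm hij), if_neg hij, hsyma j i]
    exact this.neg
  · intro x
    have hkey := key_ineq (fun i j => -ν {i, j} + ν {i} + ν {j} - ν ∅)
      hsyma htri q hq0 hq1 x Finset.univ 0
      (fun i _ j _ hij => ha0 i j hij)
    simp only [Real.rpow_zero, one_mul, Finset.card_univ] at hkey
    have hQF : dotProduct (star x) ((-(Matrix.of fun i j : E =>
        if i = j then -(1 - 1 / (Fintype.card E : ℝ))
        else -(1 - 1 / (Fintype.card E : ℝ)) +
          q ^ (-ν {i, j} + ν {i} + ν {j} - ν ∅))).mulVec x)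
        = (∑ i, x i ^ 2 + (1 - 1 / (Fintype.card E : ℝ)) * (∑ i, x i) ^ 2)
          - ∑ i, ∑ j, (if i = j then (1 : ℝ)
              else q ^ (-ν {i, j} + ν {i} + ν {j} - ν ∅)) * x i * x j := by
      simp only [dotProduct, Matrix.mulVec, Matrix.neg_apply, Matrix.of_apply,
        star_trivial]
      have step1 : ∀ i : E, (x i * ∑ j, (-(if i = j then -(1 - 1 / (Fintype.card E : ℝ))
            else -(1 - 1 / (Fintype.card E : ℝ)) +
              q ^ (-ν {i, j} + ν {i} + ν {j} - ν ∅))) * x j)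
          = ∑ j, ((1 - 1 / (Fintype.card E : ℝ)) * (x i * x j)
              + (if i = j then x i ^ 2 else 0)
              - (if i = j then (1 : ℝ)
                  else q ^ (-ν {i, j} + ν {i} + ν {j} - ν ∅)) * x i * x j) := by
        intro i
        rw [Finset.mul_sum]
        refine Finset.sum_congr rfl fun j _ => ?_
        rcases eq_or_ne i j with rfl | hij
        · simp only [eq_self_iff_true, if_true]; ring
        · simp only [if_neg hij]; ring
      calc ∑ i, x i * ∑ j, (-(if i = j then -(1 - 1 / (Fintype.card E : ℝ))
            else -(1 - 1 / (Fintype.card E : ℝ)) +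
              q ^ (-ν {i, j} + ν {i} + ν {j} - ν ∅))) * x j
          = ∑ i : E, ∑ j : E, ((1 - 1 / (Fintype.card E : ℝ)) * (x i * x j)
              + (if i = j then x i ^ 2 else 0)
              - (if i = j then (1 : ℝ)
                  else q ^ (-ν {i, j} + ν {i} + ν {j} - ν ∅)) * x i * x j) :=
            Finset.sum_congr rfl fun i _ => step1 i
        _ = (∑ i, x i ^ 2 + (1 - 1 / (Fintype.card E : ℝ)) * (∑ i, x i) ^ 2)
          - ∑ i, ∑ j, (if i = j then (1 : ℝ)
              else q ^ (-ν {i, j} + ν {i} + ν {j} - ν ∅)) * x i * x j := by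
            simp only [Finset.sum_add_distrib, Finset.sum_sub_distrib]
            have e1 : ∑ i : E, ∑ j : E, (1 - 1 / (Fintype.card E : ℝ)) * (x i * x j)
                = (1 - 1 / (Fintype.card E : ℝ)) * ((∑ i, x i) * (∑ j, x j)) := by
              rw [Finset.sum_mul_sum, Finset.mul_sum]
              exact Finset.sum_congr rfl fun i _ => (Finset.mul_sum _ _ _).symm
            have e2 : ∑ i : E, ∑ j : E, (if i = j then x i ^ 2 else 0) = ∑ i, x i ^ 2 := by
              refine Finset.sum_congr rfl fun i _ => ?_
              simp [Finset.sum_ite_eq]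
            rw [e1, e2]
            ring
    rw [hQF]
    linarith [hkey]
end
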